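/- arXiv:1701.07050 — 3 statements merged into one kernel-verified Lean document; each statement's English description precedes it below -/
import Mathlib

section
/- Under the rank condition, the weighting matrices satisfy: Λ₂ = Λ₄ − Ψ₀; C₁Λ₁ = C₁Λ₂ = Ψ₀Λ₁ = Ψ₀Λ₂ = Ψ_RΛ_R = 0; C₁Λ₄ = (1/T)·C₁; Ψ₀Λ₄ = (1/T)·Ψ₀; and M₁Λ_lM₁ = Λ_l for l = 1, 2, 3, 4. -/
open Matrix

variable {T G k₁ k₂ : ℕ}

/-- Orthogonal projection `P̄[A] = A(AᵀA)⁻¹Aᵀ` onto the column space of `A`. -/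
noncomputable def projM {n : Type*} [Fintype n] [DecidableEq n]
    (A : Matrix (Fin T) n ℝ) : Matrix (Fin T) (Fin T) ℝ :=
  A * (Aᵀ * A)⁻¹ * Aᵀ

/-- The annihilator `M̄[A] = I - P̄[A]`. -/
noncomputable def annM {n : Type*} [Fintype n] [DecidableEq n]
    (A : Matrix (Fin T) n ℝ) : Matrix (Fin T) (Fin T) ℝ :=
  1 - projM A

noncomputable def M1 (X₁ : Matrix (Fin T) (Fin k₁) ℝ) : Matrix (Fin T) (Fin T) ℝ :=
  annM X₁

noncomputable def Pm (X₁ : Matrix (Fin T) (Fin k₁) ℝ) (X₂ : Matrix (Fin T) (Fin k₂) ℝ) :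
    Matrix (Fin T) (Fin T) ℝ :=
  projM (fromCols X₁ X₂)

noncomputable def Mm (X₁ : Matrix (Fin T) (Fin k₁) ℝ) (X₂ : Matrix (Fin T) (Fin k₂) ℝ) :
    Matrix (Fin T) (Fin T) ℝ :=
  annM (fromCols X₁ X₂)

noncomputable def N1 (X₁ : Matrix (Fin T) (Fin k₁) ℝ) (X₂ : Matrix (Fin T) (Fin k₂) ℝ) :
    Matrix (Fin T) (Fin T) ℝ :=
  M1 X₁ * Pm X₁ X₂

noncomputable def B1 (Y : Matrix (Fin T) (Fin G) ℝ) (X₁ : Matrix (Fin T) (Fin k₁) ℝ) :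
    Matrix (Fin G) (Fin T) ℝ :=
  (Yᵀ * M1 X₁ * Y)⁻¹ * (Yᵀ * M1 X₁)

noncomputable def B2 (Y : Matrix (Fin T) (Fin G) ℝ) (X₁ : Matrix (Fin T) (Fin k₁) ℝ)
    (X₂ : Matrix (Fin T) (Fin k₂) ℝ) : Matrix (Fin G) (Fin T) ℝ :=
  (Yᵀ * N1 X₁ X₂ * Y)⁻¹ * (Yᵀ * N1 X₁ X₂)

noncomputable def C1 (Y : Matrix (Fin T) (Fin G) ℝ) (X₁ : Matrix (Fin T) (Fin k₁) ℝ)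
    (X₂ : Matrix (Fin T) (Fin k₂) ℝ) : Matrix (Fin G) (Fin T) ℝ :=
  B2 Y X₁ X₂ - B1 Y X₁

/-- OLS estimator `β̂`. -/
noncomputable def betaOLS (y : Fin T → ℝ) (Y : Matrix (Fin T) (Fin G) ℝ)
    (X₁ : Matrix (Fin T) (Fin k₁) ℝ) : Fin G → ℝ :=
  B1 Y X₁ *ᵥ y

/-- 2SLS estimator `β̃`. -/
noncomputable def beta2S (y : Fin T → ℝ) (Y : Matrix (Fin T) (Fin G) ℝ)
    (X₁ : Matrix (Fin T) (Fin k₁) ℝ) (X₂ : Matrix (Fin T) (Fin k₂) ℝ) : Fin G → ℝ :=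
  B2 Y X₁ X₂ *ᵥ y

noncomputable def OmIV (Y : Matrix (Fin T) (Fin G) ℝ) (X₁ : Matrix (Fin T) (Fin k₁) ℝ)
    (X₂ : Matrix (Fin T) (Fin k₂) ℝ) : Matrix (Fin G) (Fin G) ℝ :=
  (T : ℝ)⁻¹ • (Yᵀ * N1 X₁ X₂ * Y)

noncomputable def OmLS (Y : Matrix (Fin T) (Fin G) ℝ) (X₁ : Matrix (Fin T) (Fin k₁) ℝ) :
    Matrix (Fin G) (Fin G) ℝ :=
  (T : ℝ)⁻¹ • (Yᵀ * M1 X₁ * Y)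

noncomputable def SigV (Y : Matrix (Fin T) (Fin G) ℝ) (X₁ : Matrix (Fin T) (Fin k₁) ℝ)
    (X₂ : Matrix (Fin T) (Fin k₂) ℝ) : Matrix (Fin G) (Fin G) ℝ :=
  (T : ℝ)⁻¹ • (Yᵀ * Mm X₁ X₂ * Y)

noncomputable def Dhat (Y : Matrix (Fin T) (Fin G) ℝ) (X₁ : Matrix (Fin T) (Fin k₁) ℝ)
    (X₂ : Matrix (Fin T) (Fin k₂) ℝ) : Matrix (Fin G) (Fin G) ℝ :=
  (OmIV Y X₁ X₂)⁻¹ - (OmLS Y X₁)⁻¹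

noncomputable def Psi0 (Y : Matrix (Fin T) (Fin G) ℝ) (X₁ : Matrix (Fin T) (Fin k₁) ℝ)
    (X₂ : Matrix (Fin T) (Fin k₂) ℝ) : Matrix (Fin T) (Fin T) ℝ :=
  (C1 Y X₁ X₂)ᵀ * (Dhat Y X₁ X₂)⁻¹ * C1 Y X₁ X₂

noncomputable def N2 (Y : Matrix (Fin T) (Fin G) ℝ) (X₁ : Matrix (Fin T) (Fin k₁) ℝ)
    (X₂ : Matrix (Fin T) (Fin k₂) ℝ) : Matrix (Fin T) (Fin T) ℝ :=
  1 - M1 X₁ * Y * B2 Y X₁ X₂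

noncomputable def Lam1 (Y : Matrix (Fin T) (Fin G) ℝ) (X₁ : Matrix (Fin T) (Fin k₁) ℝ)
    (X₂ : Matrix (Fin T) (Fin k₂) ℝ) : Matrix (Fin T) (Fin T) ℝ :=
  (T : ℝ)⁻¹ • (N1 X₁ X₂ * annM (N1 X₁ X₂ * Y) * N1 X₁ X₂)

noncomputable def Lam2 (Y : Matrix (Fin T) (Fin G) ℝ) (X₁ : Matrix (Fin T) (Fin k₁) ℝ)
    (X₂ : Matrix (Fin T) (Fin k₂) ℝ) : Matrix (Fin T) (Fin T) ℝ :=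
  M1 X₁ * ((T : ℝ)⁻¹ • annM (M1 X₁ * Y) - Psi0 Y X₁ X₂) * M1 X₁

noncomputable def Lam3 (Y : Matrix (Fin T) (Fin G) ℝ) (X₁ : Matrix (Fin T) (Fin k₁) ℝ)
    (X₂ : Matrix (Fin T) (Fin k₂) ℝ) : Matrix (Fin T) (Fin T) ℝ :=
  (T : ℝ)⁻¹ • (M1 X₁ * (N2 Y X₁ X₂)ᵀ * N2 Y X₁ X₂ * M1 X₁)

noncomputable def Lam4 (Y : Matrix (Fin T) (Fin G) ℝ) (X₁ : Matrix (Fin T) (Fin k₁) ℝ) :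
    Matrix (Fin T) (Fin T) ℝ :=
  (T : ℝ)⁻¹ • (M1 X₁ * annM (M1 X₁ * Y) * M1 X₁)

def Ybar (Y : Matrix (Fin T) (Fin G) ℝ) (X₁ : Matrix (Fin T) (Fin k₁) ℝ) :
    Matrix (Fin T) (Fin G ⊕ Fin k₁) ℝ :=
  fromCols Y X₁

def Zfull (Y : Matrix (Fin T) (Fin G) ℝ) (X₁ : Matrix (Fin T) (Fin k₁) ℝ)
    (X₂ : Matrix (Fin T) (Fin k₂) ℝ) : Matrix (Fin T) (Fin G ⊕ (Fin k₁ ⊕ Fin k₂)) ℝ :=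
  fromCols Y (fromCols X₁ X₂)

noncomputable def PsiR (Y : Matrix (Fin T) (Fin G) ℝ) (X₁ : Matrix (Fin T) (Fin k₁) ℝ)
    (X₂ : Matrix (Fin T) (Fin k₂) ℝ) : Matrix (Fin T) (Fin T) ℝ :=
  (T : ℝ)⁻¹ • (annM (Ybar Y X₁) - annM (Zfull Y X₁ X₂))

noncomputable def LamR (Y : Matrix (Fin T) (Fin G) ℝ) (X₁ : Matrix (Fin T) (Fin k₁) ℝ)
    (X₂ : Matrix (Fin T) (Fin k₂) ℝ) : Matrix (Fin T) (Fin T) ℝ :=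
  (T : ℝ)⁻¹ • annM (Zfull Y X₁ X₂)

/-- `σ̂² = (1/T)(y−Yβ̂)ᵀM₁(y−Yβ̂)`. -/
noncomputable def sigHat2 (y : Fin T → ℝ) (Y : Matrix (Fin T) (Fin G) ℝ)
    (X₁ : Matrix (Fin T) (Fin k₁) ℝ) : ℝ :=
  (T : ℝ)⁻¹ * ((y - Y *ᵥ betaOLS y Y X₁) ⬝ᵥ (M1 X₁ *ᵥ (y - Y *ᵥ betaOLS y Y X₁)))

/-- `σ̃² = (1/T)(y−Yβ̃)ᵀM₁(y−Yβ̃)`. -/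
noncomputable def sigTil2 (y : Fin T → ℝ) (Y : Matrix (Fin T) (Fin G) ℝ)
    (X₁ : Matrix (Fin T) (Fin k₁) ℝ) (X₂ : Matrix (Fin T) (Fin k₂) ℝ) : ℝ :=
  (T : ℝ)⁻¹ * ((y - Y *ᵥ beta2S y Y X₁ X₂) ⬝ᵥ (M1 X₁ *ᵥ (y - Y *ᵥ beta2S y Y X₁ X₂)))

/-- `σ̃₁² = (1/T)(y−Yβ̃)ᵀN₁(y−Yβ̃)`. -/
noncomputable def sigTil1sq (y : Fin T → ℝ) (Y : Matrix (Fin T) (Fin G) ℝ)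
    (X₁ : Matrix (Fin T) (Fin k₁) ℝ) (X₂ : Matrix (Fin T) (Fin k₂) ℝ) : ℝ :=
  (T : ℝ)⁻¹ * ((y - Y *ᵥ beta2S y Y X₁ X₂) ⬝ᵥ (N1 X₁ X₂ *ᵥ (y - Y *ᵥ beta2S y Y X₁ X₂)))

/-- `σ̃₂² = σ̂² − (β̃−β̂)ᵀΔ̂⁻¹(β̃−β̂)`. -/
noncomputable def sigTil2sq (y : Fin T → ℝ) (Y : Matrix (Fin T) (Fin G) ℝ)
    (X₁ : Matrix (Fin T) (Fin k₁) ℝ) (X₂ : Matrix (Fin T) (Fin k₂) ℝ) : ℝ :=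
  sigHat2 y Y X₁ -
    (beta2S y Y X₁ X₂ - betaOLS y Y X₁) ⬝ᵥ
      ((Dhat Y X₁ X₂)⁻¹ *ᵥ (beta2S y Y X₁ X₂ - betaOLS y Y X₁))

/-- The rank condition: `X₁`, `X = [X₁, X₂]`, `[Y, X]` and `[P̄[X]Y, X₁]` all have
full column rank. -/
def RankCond (Y : Matrix (Fin T) (Fin G) ℝ) (X₁ : Matrix (Fin T) (Fin k₁) ℝ)
    (X₂ : Matrix (Fin T) (Fin k₂) ℝ) : Prop :=
  X₁.rank = k₁ ∧ (fromCols X₁ X₂).rank = k₁ + k₂ ∧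
    (fromCols Y (fromCols X₁ X₂)).rank = G + (k₁ + k₂) ∧
    (fromCols (Pm X₁ X₂ * Y) X₁).rank = G + k₁

set_option linter.unusedSectionVars false
set_option maxHeartbeats 1000000

section AuxGeneric
variable {T' : ℕ} {n m : Type*} [Fintype n] [DecidableEq n] [Fintype m] [DecidableEq m]
variable {A : Matrix (Fin T') n ℝ}

lemma gram_isUnit {A : Matrix (Fin T') n ℝ} (h : A.rank = Fintype.card n) :
    IsUnit (Aᵀ * A) := by
  rw [← Matrix.rank_transpose_mul_self] at h
  rw [← Matrix.mulVec_surjective_iff_isUnit]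
  have hr : LinearMap.range (Aᵀ * A).mulVecLin = ⊤ := by
    apply Submodule.eq_top_of_finrank_eq
    rw [Module.finrank_fintype_fun_eq_card]
    exact h
  intro y
  obtain ⟨x, hx⟩ := LinearMap.range_eq_top.mp hr y
  exact ⟨x, hx⟩

lemma conjT_eq_T {p q : Type*} (A : Matrix p q ℝ) : Aᴴ = Aᵀ := by
  ext i j; simp [conjTranspose_apply]

lemma posDef_of_posSemidef_isUnit {M : Matrix n n ℝ} (h1 : M.PosSemidef) (h2 : IsUnit M) :
    M.PosDef := by
  exact h1.posDef_iff_isUnit.mpr h2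

lemma projM_transpose (A : Matrix (Fin T') n ℝ) : (projM A)ᵀ = projM A := by
  simp [projM, transpose_mul, transpose_nonsing_inv, Matrix.mul_assoc]

lemma projM_mul_base (h : IsUnit (Aᵀ * A)) : projM A * A = A := by
  have hd : IsUnit (Aᵀ * A).det := (Matrix.isUnit_iff_isUnit_det _).mp h
  calc projM A * A = A * ((Aᵀ * A)⁻¹ * (Aᵀ * A)) := by
        simp [projM, Matrix.mul_assoc]
    _ = A := by rw [Matrix.nonsing_inv_mul _ hd, Matrix.mul_one]

lemma base_mul_projM (h : IsUnit (Aᵀ * A)) : Aᵀ * projM A = Aᵀ := by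
  have := congrArg Matrix.transpose (projM_mul_base h)
  simpa [transpose_mul, projM_transpose] using this

lemma projM_absorb_left {B : Matrix (Fin T') m ℝ} (E : Matrix n m ℝ)
    (hE : A * E = B) (h : IsUnit (Aᵀ * A)) : projM A * B = B := by
  rw [← hE, ← Matrix.mul_assoc, projM_mul_base h]

lemma projM_mul_projM {B : Matrix (Fin T') m ℝ} (hPB : projM A * B = B) :
    projM A * projM B = projM B := by
  rw [show projM B = B * ((Bᵀ * B)⁻¹ * Bᵀ) from by rw [projM, Matrix.mul_assoc],
    ← Matrix.mul_assoc, hPB]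

lemma projM_mul_projM' {B : Matrix (Fin T') m ℝ} (hPB : projM A * B = B) :
    projM B * projM A = projM B := by
  have := congrArg Matrix.transpose (projM_mul_projM hPB)
  simpa [transpose_mul, projM_transpose] using this

lemma projM_idem (h : IsUnit (Aᵀ * A)) : projM A * projM A = projM A :=
  projM_mul_projM (by rw [projM_mul_base h])

lemma annM_transpose (A : Matrix (Fin T') n ℝ) : (annM A)ᵀ = annM A := by
  simp [annM, transpose_sub, projM_transpose]

lemma annM_idem (h : IsUnit (Aᵀ * A)) : annM A * annM A = annM A := by
  simp [annM, Matrix.sub_mul, Matrix.mul_sub, projM_idem h]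

lemma annM_mul_base (h : IsUnit (Aᵀ * A)) : annM A * A = 0 := by
  simp [annM, Matrix.sub_mul, projM_mul_base h]

lemma base_mul_annM (h : IsUnit (Aᵀ * A)) : Aᵀ * annM A = 0 := by
  simp [annM, Matrix.mul_sub, base_mul_projM h]

end AuxGeneric

section Struct

variable {T G k₁ k₂ : ℕ}
variable (Y : Matrix (Fin T) (Fin G) ℝ) (X₁ : Matrix (Fin T) (Fin k₁) ℝ)
  (X₂ : Matrix (Fin T) (Fin k₂) ℝ)
variable (hX₁ : IsUnit (X₁ᵀ * X₁))
  (hX : IsUnit ((fromCols X₁ X₂)ᵀ * fromCols X₁ X₂))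

lemma M1_transpose' : (M1 X₁)ᵀ = M1 X₁ := annM_transpose X₁

lemma Mm_transpose' : (Mm X₁ X₂)ᵀ = Mm X₁ X₂ := annM_transpose _

lemma X_mul_E : fromCols X₁ X₂ *
    fromRows (1 : Matrix (Fin k₁) (Fin k₁) ℝ) (0 : Matrix (Fin k₂) (Fin k₁) ℝ) = X₁ := by
  rw [fromCols_mul_fromRows]; simp

include hX₁ hX

lemma Pm_mul_X₁ : Pm X₁ X₂ * X₁ = X₁ :=
  projM_absorb_left _ (X_mul_E X₁ X₂) hX

lemma Pm_mul_P1 : Pm X₁ X₂ * projM X₁ = projM X₁ :=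
  projM_mul_projM (Pm_mul_X₁ X₁ X₂ hX₁ hX)

lemma P1_mul_Pm : projM X₁ * Pm X₁ X₂ = projM X₁ :=
  projM_mul_projM' (Pm_mul_X₁ X₁ X₂ hX₁ hX)

lemma M1_idem : M1 X₁ * M1 X₁ = M1 X₁ := annM_idem hX₁

lemma Mm_idem : Mm X₁ X₂ * Mm X₁ X₂ = Mm X₁ X₂ := annM_idem hX

lemma N1_eq : N1 X₁ X₂ = Pm X₁ X₂ - projM X₁ := by
  rw [N1, M1, annM, Matrix.sub_mul, Matrix.one_mul, P1_mul_Pm X₁ X₂ hX₁ hX]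

lemma N1_transpose : (N1 X₁ X₂)ᵀ = N1 X₁ X₂ := by
  rw [N1_eq X₁ X₂ hX₁ hX, transpose_sub, projM_transpose, Pm, projM_transpose]

lemma Pm_idem : Pm X₁ X₂ * Pm X₁ X₂ = Pm X₁ X₂ := projM_idem hX

lemma N1_idem : N1 X₁ X₂ * N1 X₁ X₂ = N1 X₁ X₂ := by
  rw [N1_eq X₁ X₂ hX₁ hX, Matrix.sub_mul, Matrix.mul_sub, Matrix.mul_sub,
    Pm_idem X₁ X₂ hX₁ hX, Pm_mul_P1 X₁ X₂ hX₁ hX, P1_mul_Pm X₁ X₂ hX₁ hX, projM_idem hX₁]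
  abel

lemma N1_mul_M1 : N1 X₁ X₂ * M1 X₁ = N1 X₁ X₂ := by
  rw [N1_eq X₁ X₂ hX₁ hX, M1, annM, Matrix.mul_sub, Matrix.mul_one, Matrix.sub_mul,
    Pm_mul_P1 X₁ X₂ hX₁ hX, projM_idem hX₁]
  abel

lemma M1_mul_N1 : M1 X₁ * N1 X₁ X₂ = N1 X₁ X₂ := by
  rw [N1_eq X₁ X₂ hX₁ hX, M1, annM, Matrix.mul_sub, Matrix.sub_mul, Matrix.sub_mul,
    Matrix.one_mul, Matrix.one_mul, P1_mul_Pm X₁ X₂ hX₁ hX, projM_idem hX₁]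
  abel

lemma M1_split : M1 X₁ = N1 X₁ X₂ + Mm X₁ X₂ := by
  rw [N1_eq X₁ X₂ hX₁ hX, Mm, annM, M1, annM, Pm]
  abel

lemma Pm_M1_Pm : Pm X₁ X₂ * M1 X₁ * Pm X₁ X₂ = N1 X₁ X₂ := by
  rw [M1, annM, Matrix.mul_sub, Matrix.mul_one, Matrix.sub_mul, Pm_mul_P1 X₁ X₂ hX₁ hX,
    Pm_idem X₁ X₂ hX₁ hX, P1_mul_Pm X₁ X₂ hX₁ hX, N1_eq X₁ X₂ hX₁ hX]

lemma gram_N1_eq : Yᵀ * N1 X₁ X₂ * Y = (N1 X₁ X₂ * Y)ᵀ * (N1 X₁ X₂ * Y) := by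
  calc Yᵀ * N1 X₁ X₂ * Y = Yᵀ * (N1 X₁ X₂ * N1 X₁ X₂) * Y := by rw [N1_idem X₁ X₂ hX₁ hX]
    _ = (N1 X₁ X₂ * Y)ᵀ * (N1 X₁ X₂ * Y) := by
        rw [transpose_mul, N1_transpose X₁ X₂ hX₁ hX]; simp only [Matrix.mul_assoc]

lemma gram_Mm_eq : Yᵀ * Mm X₁ X₂ * Y = (Mm X₁ X₂ * Y)ᵀ * (Mm X₁ X₂ * Y) := by
  calc Yᵀ * Mm X₁ X₂ * Y = Yᵀ * (Mm X₁ X₂ * Mm X₁ X₂) * Y := by rw [Mm_idem X₁ X₂ hX₁ hX]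
    _ = (Mm X₁ X₂ * Y)ᵀ * (Mm X₁ X₂ * Y) := by
        rw [transpose_mul, Mm_transpose' X₁ X₂]; simp only [Matrix.mul_assoc]

lemma gram_M1_eq : Yᵀ * M1 X₁ * Y = (M1 X₁ * Y)ᵀ * (M1 X₁ * Y) := by
  calc Yᵀ * M1 X₁ * Y = Yᵀ * (M1 X₁ * M1 X₁) * Y := by rw [M1_idem X₁ X₂ hX₁ hX]
    _ = (M1 X₁ * Y)ᵀ * (M1 X₁ * Y) := by
        rw [transpose_mul, M1_transpose' X₁]; simp only [Matrix.mul_assoc]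

lemma posSemidef_gram_N1 : (Yᵀ * N1 X₁ X₂ * Y).PosSemidef := by
  rw [gram_N1_eq Y X₁ X₂ hX₁ hX, ← conjT_eq_T]
  exact Matrix.posSemidef_conjTranspose_mul_self _

lemma posSemidef_gram_Mm : (Yᵀ * Mm X₁ X₂ * Y).PosSemidef := by
  rw [gram_Mm_eq Y X₁ X₂ hX₁ hX, ← conjT_eq_T]
  exact Matrix.posSemidef_conjTranspose_mul_self _

lemma gram_M1_split : Yᵀ * M1 X₁ * Y = Yᵀ * N1 X₁ X₂ * Y + Yᵀ * Mm X₁ X₂ * Y := by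
  rw [M1_split X₁ X₂ hX₁ hX, Matrix.mul_add, Matrix.add_mul]

end Struct
section Units

variable {T G k₁ k₂ : ℕ}
variable (Y : Matrix (Fin T) (Fin G) ℝ) (X₁ : Matrix (Fin T) (Fin k₁) ℝ)
  (X₂ : Matrix (Fin T) (Fin k₂) ℝ)
variable (hX₁ : IsUnit (X₁ᵀ * X₁))
  (hX : IsUnit ((fromCols X₁ X₂)ᵀ * fromCols X₁ X₂))

include hX₁ hX

lemma isUnit_gram_Mm (hZ : (fromCols Y (fromCols X₁ X₂)).rank = G + (k₁ + k₂)) :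
    IsUnit (Yᵀ * Mm X₁ X₂ * Y) := by
  have hcard : (fromCols Y (fromCols X₁ X₂)).rank
      = Fintype.card (Fin G ⊕ (Fin k₁ ⊕ Fin k₂)) := by simpa using hZ
  have hg := gram_isUnit hcard
  rw [transpose_fromCols, fromRows_mul_fromCols] at hg
  have : Invertible ((fromCols X₁ X₂)ᵀ * fromCols X₁ X₂) := hX.invertible
  rw [Matrix.isUnit_fromBlocks_iff_of_invertible₂₂, Matrix.invOf_eq_nonsing_inv] at hg
  convert hg using 1
  rw [Mm, annM, projM, Matrix.mul_sub, Matrix.mul_one, Matrix.sub_mul]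
  simp only [Matrix.mul_assoc]

lemma isUnit_gram_N1 (hW : (fromCols (Pm X₁ X₂ * Y) X₁).rank = G + k₁) :
    IsUnit (Yᵀ * N1 X₁ X₂ * Y) := by
  have hcard : (fromCols (Pm X₁ X₂ * Y) X₁).rank = Fintype.card (Fin G ⊕ Fin k₁) := by
    simpa using hW
  have hg := gram_isUnit hcard
  rw [transpose_fromCols, fromRows_mul_fromCols] at hg
  have : Invertible (X₁ᵀ * X₁) := hX₁.invertible
  rw [Matrix.isUnit_fromBlocks_iff_of_invertible₂₂, Matrix.invOf_eq_nonsing_inv] at hg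
  convert hg using 1
  have hPmT : (Pm X₁ X₂)ᵀ = Pm X₁ X₂ := projM_transpose _
  have e1 : (Pm X₁ X₂ * Y)ᵀ * X₁ * (X₁ᵀ * X₁)⁻¹ * (X₁ᵀ * (Pm X₁ X₂ * Y))
      = (Pm X₁ X₂ * Y)ᵀ * projM X₁ * (Pm X₁ X₂ * Y) := by
    rw [projM]; simp only [Matrix.mul_assoc]
  rw [e1]
  have e2 : (Pm X₁ X₂ * Y)ᵀ * (Pm X₁ X₂ * Y) - (Pm X₁ X₂ * Y)ᵀ * projM X₁ * (Pm X₁ X₂ * Y)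
      = (Pm X₁ X₂ * Y)ᵀ * M1 X₁ * (Pm X₁ X₂ * Y) := by
    rw [M1, annM, Matrix.mul_sub, Matrix.mul_one, Matrix.sub_mul]
  rw [e2, transpose_mul, hPmT, ← Pm_M1_Pm X₁ X₂ hX₁ hX]
  simp only [Matrix.mul_assoc]

lemma posDef_gram_N1 (hW : (fromCols (Pm X₁ X₂ * Y) X₁).rank = G + k₁) :
    (Yᵀ * N1 X₁ X₂ * Y).PosDef :=
  posDef_of_posSemidef_isUnit (posSemidef_gram_N1 Y X₁ X₂ hX₁ hX)
    (isUnit_gram_N1 Y X₁ X₂ hX₁ hX hW)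

lemma isUnit_gram_M1 (hW : (fromCols (Pm X₁ X₂ * Y) X₁).rank = G + k₁) :
    IsUnit (Yᵀ * M1 X₁ * Y) := by
  rw [gram_M1_split Y X₁ X₂ hX₁ hX]
  exact ((posDef_gram_N1 Y X₁ X₂ hX₁ hX hW).add_posSemidef
    (posSemidef_gram_Mm Y X₁ X₂ hX₁ hX)).isUnit

lemma isUnit_gram_Ybar (hGL : IsUnit (Yᵀ * M1 X₁ * Y)) :
    IsUnit ((Ybar Y X₁)ᵀ * Ybar Y X₁) := by
  rw [Ybar, transpose_fromCols, fromRows_mul_fromCols]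
  have : Invertible (X₁ᵀ * X₁) := hX₁.invertible
  rw [Matrix.isUnit_fromBlocks_iff_of_invertible₂₂, Matrix.invOf_eq_nonsing_inv]
  have e : Yᵀ * Y - Yᵀ * X₁ * (X₁ᵀ * X₁)⁻¹ * (X₁ᵀ * Y) = Yᵀ * M1 X₁ * Y := by
    rw [M1, annM, projM, Matrix.mul_sub, Matrix.mul_one, Matrix.sub_mul]
    simp only [Matrix.mul_assoc]
  rw [e]
  exact hGL

lemma Z_mul_E : Zfull Y X₁ X₂ * (fromBlocks (1 : Matrix (Fin G) (Fin G) ℝ) 0 0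
    (fromRows (1 : Matrix (Fin k₁) (Fin k₁) ℝ) (0 : Matrix (Fin k₂) (Fin k₁) ℝ)))
    = Ybar Y X₁ := by
  rw [Zfull, fromCols_mul_fromBlocks, X_mul_E X₁ X₂, Ybar]
  simp

lemma annYbar_mul_annZ (hGL : IsUnit (Yᵀ * M1 X₁ * Y))
    (hZg : IsUnit ((Zfull Y X₁ X₂)ᵀ * Zfull Y X₁ X₂)) :
    annM (Ybar Y X₁) * annM (Zfull Y X₁ X₂) = annM (Zfull Y X₁ X₂) := by
  have h1 : projM (Zfull Y X₁ X₂) * Ybar Y X₁ = Ybar Y X₁ :=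
    projM_absorb_left _ (Z_mul_E Y X₁ X₂ hX₁ hX) hZg
  have h2 := projM_mul_projM' h1
  rw [annM, annM, Matrix.sub_mul, Matrix.mul_sub, Matrix.mul_sub, Matrix.one_mul,
    Matrix.mul_one, h2]
  simp only [Matrix.one_mul]
  abel

end Units
section Estimators

variable {T G k₁ k₂ : ℕ}
variable (Y : Matrix (Fin T) (Fin G) ℝ) (X₁ : Matrix (Fin T) (Fin k₁) ℝ)
  (X₂ : Matrix (Fin T) (Fin k₂) ℝ)
variable (hX₁ : IsUnit (X₁ᵀ * X₁))
  (hX : IsUnit ((fromCols X₁ X₂)ᵀ * fromCols X₁ X₂))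
  (hGN : IsUnit (Yᵀ * N1 X₁ X₂ * Y)) (hGL : IsUnit (Yᵀ * M1 X₁ * Y))

lemma right_collapse {p : Type*} [Fintype p] (U : Matrix p (Fin G) ℝ)
    (Q R Q' : Matrix (Fin T) (Fin T) ℝ) (h : Q * R = Q') :
    U * (Yᵀ * Q) * R = U * (Yᵀ * Q') := by
  rw [← h]; simp only [Matrix.mul_assoc]

lemma right_collapse2 {p : Type*} [Fintype p] (U : Matrix p (Fin G) ℝ)
    (Q R Q' : Matrix (Fin T) (Fin T) ℝ) (h : Q * R = Q') :
    U * (Yᵀ * Q) * (R * Y) = U * (Yᵀ * Q' * Y) := by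
  rw [← h]; simp only [Matrix.mul_assoc]

lemma collapse {p q : Type*} [Fintype p] [DecidableEq p] [Fintype q] [DecidableEq q]
    (U : Matrix p (Fin G) ℝ) (Q R Q' : Matrix (Fin T) (Fin T) ℝ)
    (S : Matrix (Fin G) q ℝ) (h : Q * R = Q') :
    (U * (Yᵀ * Q)) * (R * Y * S) = U * ((Yᵀ * Q' * Y) * S) := by
  rw [← h]; simp only [Matrix.mul_assoc]

include hX₁ hX hGN hGL

lemma gramN_symm : (Yᵀ * N1 X₁ X₂ * Y)ᵀ = Yᵀ * N1 X₁ X₂ * Y := by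
  rw [transpose_mul, transpose_mul, transpose_transpose, N1_transpose X₁ X₂ hX₁ hX,
    ← Matrix.mul_assoc]

lemma gramL_symm : (Yᵀ * M1 X₁ * Y)ᵀ = Yᵀ * M1 X₁ * Y := by
  rw [transpose_mul, transpose_mul, transpose_transpose, M1_transpose' X₁, ← Matrix.mul_assoc]

lemma B1_mul_M1 : B1 Y X₁ * M1 X₁ = B1 Y X₁ := by
  rw [B1, right_collapse Y _ _ _ _ (M1_idem X₁ X₂ hX₁ hX)]

lemma B2_mul_M1 : B2 Y X₁ X₂ * M1 X₁ = B2 Y X₁ X₂ := by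
  rw [B2, right_collapse Y _ _ _ _ (N1_mul_M1 X₁ X₂ hX₁ hX)]

lemma C1_mul_M1 : C1 Y X₁ X₂ * M1 X₁ = C1 Y X₁ X₂ := by
  rw [C1, Matrix.sub_mul, B2_mul_M1 Y X₁ X₂ hX₁ hX hGN hGL, B1_mul_M1 Y X₁ X₂ hX₁ hX hGN hGL]

lemma B1_mul_M1Y : B1 Y X₁ * (M1 X₁ * Y) = 1 := by
  rw [B1, right_collapse2 Y _ _ _ _ (M1_idem X₁ X₂ hX₁ hX),
    Matrix.nonsing_inv_mul _ ((Matrix.isUnit_iff_isUnit_det _).mp hGL)]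

lemma B2_mul_M1Y : B2 Y X₁ X₂ * (M1 X₁ * Y) = 1 := by
  rw [B2, right_collapse2 Y _ _ _ _ (N1_mul_M1 X₁ X₂ hX₁ hX),
    Matrix.nonsing_inv_mul _ ((Matrix.isUnit_iff_isUnit_det _).mp hGN)]

lemma C1_mul_M1Y : C1 Y X₁ X₂ * (M1 X₁ * Y) = 0 := by
  rw [C1, Matrix.sub_mul, B2_mul_M1Y Y X₁ X₂ hX₁ hX hGN hGL,
    B1_mul_M1Y Y X₁ X₂ hX₁ hX hGN hGL, sub_self]

lemma B2_transpose : (B2 Y X₁ X₂)ᵀ = N1 X₁ X₂ * Y * (Yᵀ * N1 X₁ X₂ * Y)⁻¹ := by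
  rw [B2, transpose_mul, transpose_mul, transpose_transpose, N1_transpose X₁ X₂ hX₁ hX,
    transpose_nonsing_inv, gramN_symm Y X₁ X₂ hX₁ hX hGN hGL]

lemma B1_transpose : (B1 Y X₁)ᵀ = M1 X₁ * Y * (Yᵀ * M1 X₁ * Y)⁻¹ := by
  rw [B1, transpose_mul, transpose_mul, transpose_transpose, M1_transpose' X₁,
    transpose_nonsing_inv, gramL_symm Y X₁ X₂ hX₁ hX hGN hGL]

lemma B2_B2T : B2 Y X₁ X₂ * (B2 Y X₁ X₂)ᵀ = (Yᵀ * N1 X₁ X₂ * Y)⁻¹ := by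
  rw [B2_transpose Y X₁ X₂ hX₁ hX hGN hGL, B2,
    collapse Y _ _ _ _ _ (N1_idem X₁ X₂ hX₁ hX),
    Matrix.mul_nonsing_inv _ ((Matrix.isUnit_iff_isUnit_det _).mp hGN), Matrix.mul_one]

lemma B2_B1T : B2 Y X₁ X₂ * (B1 Y X₁)ᵀ = (Yᵀ * M1 X₁ * Y)⁻¹ := by
  rw [B1_transpose Y X₁ X₂ hX₁ hX hGN hGL, B2,
    collapse Y _ _ _ _ _ (N1_mul_M1 X₁ X₂ hX₁ hX), ← Matrix.mul_assoc,
    Matrix.nonsing_inv_mul _ ((Matrix.isUnit_iff_isUnit_det _).mp hGN), Matrix.one_mul]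

lemma B1_B2T : B1 Y X₁ * (B2 Y X₁ X₂)ᵀ = (Yᵀ * M1 X₁ * Y)⁻¹ := by
  rw [B2_transpose Y X₁ X₂ hX₁ hX hGN hGL, B1,
    collapse Y _ _ _ _ _ (M1_mul_N1 X₁ X₂ hX₁ hX),
    Matrix.mul_nonsing_inv _ ((Matrix.isUnit_iff_isUnit_det _).mp hGN), Matrix.mul_one]

lemma B1_B1T : B1 Y X₁ * (B1 Y X₁)ᵀ = (Yᵀ * M1 X₁ * Y)⁻¹ := by
  rw [B1_transpose Y X₁ X₂ hX₁ hX hGN hGL, B1,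
    collapse Y _ _ _ _ _ (M1_idem X₁ X₂ hX₁ hX),
    Matrix.mul_nonsing_inv _ ((Matrix.isUnit_iff_isUnit_det _).mp hGL), Matrix.mul_one]

lemma C1_C1T : C1 Y X₁ X₂ * (C1 Y X₁ X₂)ᵀ
    = (Yᵀ * N1 X₁ X₂ * Y)⁻¹ - (Yᵀ * M1 X₁ * Y)⁻¹ := by
  rw [C1, transpose_sub, Matrix.sub_mul, Matrix.mul_sub, Matrix.mul_sub,
    B2_B2T Y X₁ X₂ hX₁ hX hGN hGL, B2_B1T Y X₁ X₂ hX₁ hX hGN hGL,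
    B1_B2T Y X₁ X₂ hX₁ hX hGN hGL, B1_B1T Y X₁ X₂ hX₁ hX hGN hGL]
  abel

lemma B2_mul_N1 : B2 Y X₁ X₂ * N1 X₁ X₂ = (Yᵀ * N1 X₁ X₂ * Y)⁻¹ * (Yᵀ * N1 X₁ X₂) := by
  rw [B2, right_collapse Y _ _ _ _ (N1_idem X₁ X₂ hX₁ hX)]

lemma B1_mul_N1 : B1 Y X₁ * N1 X₁ X₂ = (Yᵀ * M1 X₁ * Y)⁻¹ * (Yᵀ * N1 X₁ X₂) := by
  rw [B1, right_collapse Y _ _ _ _ (M1_mul_N1 X₁ X₂ hX₁ hX)]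

lemma C1_mul_N1 : C1 Y X₁ X₂ * N1 X₁ X₂
    = (Yᵀ * N1 X₁ X₂ * Y)⁻¹ * (Yᵀ * N1 X₁ X₂) - (Yᵀ * M1 X₁ * Y)⁻¹ * (Yᵀ * N1 X₁ X₂) := by
  rw [C1, Matrix.sub_mul, B2_mul_N1 Y X₁ X₂ hX₁ hX hGN hGL, B1_mul_N1 Y X₁ X₂ hX₁ hX hGN hGL]

lemma YtN1_mul_annN1Y : Yᵀ * N1 X₁ X₂ * annM (N1 X₁ X₂ * Y) = 0 := by
  have hg : IsUnit ((N1 X₁ X₂ * Y)ᵀ * (N1 X₁ X₂ * Y)) := by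
    rw [← gram_N1_eq Y X₁ X₂ hX₁ hX]; exact hGN
  have h := base_mul_annM hg
  rw [transpose_mul, N1_transpose X₁ X₂ hX₁ hX, Matrix.mul_assoc] at h
  rw [Matrix.mul_assoc]
  exact h

lemma C1_N1annN1 : C1 Y X₁ X₂ * (N1 X₁ X₂ * annM (N1 X₁ X₂ * Y) * N1 X₁ X₂) = 0 := by
  rw [← Matrix.mul_assoc, ← Matrix.mul_assoc, C1_mul_N1 Y X₁ X₂ hX₁ hX hGN hGL,
    Matrix.sub_mul, Matrix.mul_assoc ((Yᵀ * N1 X₁ X₂ * Y)⁻¹),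
    Matrix.mul_assoc ((Yᵀ * M1 X₁ * Y)⁻¹), YtN1_mul_annN1Y Y X₁ X₂ hX₁ hX hGN hGL,
    Matrix.mul_zero, Matrix.mul_zero, sub_self, Matrix.zero_mul]

lemma C1_mul_annM1Y : C1 Y X₁ X₂ * annM (M1 X₁ * Y) = C1 Y X₁ X₂ := by
  rw [annM, Matrix.mul_sub, Matrix.mul_one, projM, ← Matrix.mul_assoc, ← Matrix.mul_assoc,
    C1_mul_M1Y Y X₁ X₂ hX₁ hX hGN hGL, Matrix.zero_mul, Matrix.zero_mul, sub_zero]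

lemma C1_M1annM1 : C1 Y X₁ X₂ * (M1 X₁ * annM (M1 X₁ * Y) * M1 X₁) = C1 Y X₁ X₂ := by
  rw [← Matrix.mul_assoc, ← Matrix.mul_assoc, C1_mul_M1 Y X₁ X₂ hX₁ hX hGN hGL,
    C1_mul_annM1Y Y X₁ X₂ hX₁ hX hGN hGL, C1_mul_M1 Y X₁ X₂ hX₁ hX hGN hGL]

end Estimators
section PsiLayer

variable {T G k₁ k₂ : ℕ}
variable (Y : Matrix (Fin T) (Fin G) ℝ) (X₁ : Matrix (Fin T) (Fin k₁) ℝ)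
  (X₂ : Matrix (Fin T) (Fin k₂) ℝ)
variable (hT : (T : ℝ) ≠ 0) (hX₁ : IsUnit (X₁ᵀ * X₁))
  (hX : IsUnit ((fromCols X₁ X₂)ᵀ * fromCols X₁ X₂))
  (hGN : IsUnit (Yᵀ * N1 X₁ X₂ * Y)) (hGL : IsUnit (Yᵀ * M1 X₁ * Y))

include hT hX₁ hX hGN hGL

lemma OmIV_inv : (OmIV Y X₁ X₂)⁻¹ = (T : ℝ) • (Yᵀ * N1 X₁ X₂ * Y)⁻¹ := by
  apply Matrix.inv_eq_right_inv
  rw [OmIV, Matrix.smul_mul, Matrix.mul_smul, smul_smul,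
    Matrix.mul_nonsing_inv _ ((Matrix.isUnit_iff_isUnit_det _).mp hGN),
    inv_mul_cancel₀ hT, one_smul]

lemma OmLS_inv : (OmLS Y X₁)⁻¹ = (T : ℝ) • (Yᵀ * M1 X₁ * Y)⁻¹ := by
  apply Matrix.inv_eq_right_inv
  rw [OmLS, Matrix.smul_mul, Matrix.mul_smul, smul_smul,
    Matrix.mul_nonsing_inv _ ((Matrix.isUnit_iff_isUnit_det _).mp hGL),
    inv_mul_cancel₀ hT, one_smul]

lemma Dhat_eq : Dhat Y X₁ X₂
    = (T : ℝ) • ((Yᵀ * N1 X₁ X₂ * Y)⁻¹ - (Yᵀ * M1 X₁ * Y)⁻¹) := by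
  rw [Dhat, OmIV_inv Y X₁ X₂ hT hX₁ hX hGN hGL, OmLS_inv Y X₁ X₂ hT hX₁ hX hGN hGL, smul_sub]

lemma D_eq : (Yᵀ * N1 X₁ X₂ * Y)⁻¹ - (Yᵀ * M1 X₁ * Y)⁻¹
    = (Yᵀ * N1 X₁ X₂ * Y)⁻¹ * (Yᵀ * Mm X₁ X₂ * Y) * (Yᵀ * M1 X₁ * Y)⁻¹ := by
  have h : Yᵀ * Mm X₁ X₂ * Y = Yᵀ * M1 X₁ * Y - Yᵀ * N1 X₁ X₂ * Y := by
    rw [gram_M1_split Y X₁ X₂ hX₁ hX]; abel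
  rw [h, Matrix.mul_sub, Matrix.sub_mul, Matrix.mul_assoc ((Yᵀ * N1 X₁ X₂ * Y)⁻¹),
    Matrix.mul_nonsing_inv _ ((Matrix.isUnit_iff_isUnit_det _).mp hGL), Matrix.mul_one,
    Matrix.nonsing_inv_mul _ ((Matrix.isUnit_iff_isUnit_det _).mp hGN), Matrix.one_mul]

lemma isUnit_D (hGM : IsUnit (Yᵀ * Mm X₁ X₂ * Y)) :
    IsUnit ((Yᵀ * N1 X₁ X₂ * Y)⁻¹ - (Yᵀ * M1 X₁ * Y)⁻¹) := by
  rw [D_eq Y X₁ X₂ hT hX₁ hX hGN hGL]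
  exact ((Matrix.isUnit_nonsing_inv_iff.mpr hGN).mul hGM).mul
    (Matrix.isUnit_nonsing_inv_iff.mpr hGL)

lemma Dhat_inv (hGM : IsUnit (Yᵀ * Mm X₁ X₂ * Y)) :
    (Dhat Y X₁ X₂)⁻¹
      = (T : ℝ)⁻¹ • ((Yᵀ * N1 X₁ X₂ * Y)⁻¹ - (Yᵀ * M1 X₁ * Y)⁻¹)⁻¹ := by
  apply Matrix.inv_eq_right_inv
  rw [Dhat_eq Y X₁ X₂ hT hX₁ hX hGN hGL, Matrix.smul_mul, Matrix.mul_smul, smul_smul,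
    mul_inv_cancel₀ hT,
    Matrix.mul_nonsing_inv _ ((Matrix.isUnit_iff_isUnit_det _).mp
      (isUnit_D Y X₁ X₂ hT hX₁ hX hGN hGL hGM)), one_smul]

lemma C1_mul_Psi0 (hGM : IsUnit (Yᵀ * Mm X₁ X₂ * Y)) :
    C1 Y X₁ X₂ * Psi0 Y X₁ X₂ = (T : ℝ)⁻¹ • C1 Y X₁ X₂ := by
  rw [Psi0, ← Matrix.mul_assoc, ← Matrix.mul_assoc, C1_C1T Y X₁ X₂ hX₁ hX hGN hGL,
    Dhat_inv Y X₁ X₂ hT hX₁ hX hGN hGL hGM, Matrix.mul_smul,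
    Matrix.mul_nonsing_inv _ ((Matrix.isUnit_iff_isUnit_det _).mp
      (isUnit_D Y X₁ X₂ hT hX₁ hX hGN hGL hGM)), Matrix.smul_mul, Matrix.one_mul]

omit hT in
lemma Psi0_mul (W : Matrix (Fin T) (Fin T) ℝ) :
    Psi0 Y X₁ X₂ * W = (C1 Y X₁ X₂)ᵀ * (Dhat Y X₁ X₂)⁻¹ * (C1 Y X₁ X₂ * W) := by
  rw [Psi0, Matrix.mul_assoc ((C1 Y X₁ X₂)ᵀ * (Dhat Y X₁ X₂)⁻¹)]

omit hT in
lemma M1_mul_C1T : M1 X₁ * (C1 Y X₁ X₂)ᵀ = (C1 Y X₁ X₂)ᵀ := by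
  have h := congrArg Matrix.transpose (C1_mul_M1 Y X₁ X₂ hX₁ hX hGN hGL)
  rw [transpose_mul, M1_transpose' X₁] at h
  exact h

omit hT in
lemma M1_Psi0_M1 : M1 X₁ * Psi0 Y X₁ X₂ * M1 X₁ = Psi0 Y X₁ X₂ := by
  rw [Psi0, ← Matrix.mul_assoc, ← Matrix.mul_assoc, M1_mul_C1T Y X₁ X₂ hX₁ hX hGN hGL,
    Matrix.mul_assoc ((C1 Y X₁ X₂)ᵀ * (Dhat Y X₁ X₂)⁻¹), C1_mul_M1 Y X₁ X₂ hX₁ hX hGN hGL]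

end PsiLayer
/-- **Properties of the weighting matrices.**  Under the rank condition:
`Λ₂ = Λ₄ − Ψ₀`; `C₁Λ₁ = C₁Λ₂ = Ψ₀Λ₁ = Ψ₀Λ₂ = Ψ_RΛ_R = 0`; `C₁Λ₄ = (1/T)C₁`;
`Ψ₀Λ₄ = (1/T)Ψ₀`; and `M₁Λ_lM₁ = Λ_l` for `l = 1, 2, 3, 4`. -/
theorem stmt9 {T G k₁ k₂ : ℕ}
    (hT : 0 < T) (hG : 0 < G) (hk₁ : 0 < k₁) (hk₂ : 0 < k₂)
    (Y : Matrix (Fin T) (Fin G) ℝ)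
    (X₁ : Matrix (Fin T) (Fin k₁) ℝ) (X₂ : Matrix (Fin T) (Fin k₂) ℝ)
    (hrank : RankCond Y X₁ X₂) :
    Lam2 Y X₁ X₂ = Lam4 Y X₁ - Psi0 Y X₁ X₂ ∧
    C1 Y X₁ X₂ * Lam1 Y X₁ X₂ = 0 ∧
    C1 Y X₁ X₂ * Lam2 Y X₁ X₂ = 0 ∧
    Psi0 Y X₁ X₂ * Lam1 Y X₁ X₂ = 0 ∧
    Psi0 Y X₁ X₂ * Lam2 Y X₁ X₂ = 0 ∧
    PsiR Y X₁ X₂ * LamR Y X₁ X₂ = 0 ∧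
    C1 Y X₁ X₂ * Lam4 Y X₁ = (T : ℝ)⁻¹ • C1 Y X₁ X₂ ∧
    Psi0 Y X₁ X₂ * Lam4 Y X₁ = (T : ℝ)⁻¹ • Psi0 Y X₁ X₂ ∧
    M1 X₁ * Lam1 Y X₁ X₂ * M1 X₁ = Lam1 Y X₁ X₂ ∧
    M1 X₁ * Lam2 Y X₁ X₂ * M1 X₁ = Lam2 Y X₁ X₂ ∧
    M1 X₁ * Lam3 Y X₁ X₂ * M1 X₁ = Lam3 Y X₁ X₂ ∧
    M1 X₁ * Lam4 Y X₁ * M1 X₁ = Lam4 Y X₁ := by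
  obtain ⟨h1, h2, h3, h4⟩ := hrank
  have hTne : (T : ℝ) ≠ 0 := Nat.cast_ne_zero.mpr hT.ne'
  have hX₁ : IsUnit (X₁ᵀ * X₁) := gram_isUnit (by simpa using h1)
  have hX : IsUnit ((fromCols X₁ X₂)ᵀ * fromCols X₁ X₂) :=
    gram_isUnit (by simpa using h2)
  have hGM : IsUnit (Yᵀ * Mm X₁ X₂ * Y) := isUnit_gram_Mm Y X₁ X₂ hX₁ hX h3
  have hGN : IsUnit (Yᵀ * N1 X₁ X₂ * Y) := isUnit_gram_N1 Y X₁ X₂ hX₁ hX h4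
  have hGL : IsUnit (Yᵀ * M1 X₁ * Y) := isUnit_gram_M1 Y X₁ X₂ hX₁ hX h4
  have hZg : IsUnit ((Zfull Y X₁ X₂)ᵀ * Zfull Y X₁ X₂) := gram_isUnit (by simpa [Zfull] using h3)
  have hM1idem := M1_idem X₁ X₂ hX₁ hX
  have hC1L4 : C1 Y X₁ X₂ * Lam4 Y X₁ = (T : ℝ)⁻¹ • C1 Y X₁ X₂ := by
    rw [Lam4, Matrix.mul_smul, C1_M1annM1 Y X₁ X₂ hX₁ hX hGN hGL]
  have hC1L1 : C1 Y X₁ X₂ * Lam1 Y X₁ X₂ = 0 := by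
    rw [Lam1, Matrix.mul_smul, C1_N1annN1 Y X₁ X₂ hX₁ hX hGN hGL, smul_zero]
  have hC1Psi := C1_mul_Psi0 Y X₁ X₂ hTne hX₁ hX hGN hGL hGM
  have hLam2 : Lam2 Y X₁ X₂ = Lam4 Y X₁ - Psi0 Y X₁ X₂ := by
    rw [Lam2, Matrix.mul_sub, Matrix.sub_mul, Matrix.mul_smul, Matrix.smul_mul,
      M1_Psi0_M1 Y X₁ X₂ hX₁ hX hGN hGL, Lam4]
  have hC1L2 : C1 Y X₁ X₂ * Lam2 Y X₁ X₂ = 0 := by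
    rw [hLam2, Matrix.mul_sub, hC1L4, hC1Psi, sub_self]
  have hPsiL1 : Psi0 Y X₁ X₂ * Lam1 Y X₁ X₂ = 0 := by
    rw [Psi0_mul Y X₁ X₂ hX₁ hX hGN hGL, hC1L1, Matrix.mul_zero]
  have hPsiL4 : Psi0 Y X₁ X₂ * Lam4 Y X₁ = (T : ℝ)⁻¹ • Psi0 Y X₁ X₂ := by
    rw [Psi0_mul Y X₁ X₂ hX₁ hX hGN hGL, hC1L4, Matrix.mul_smul, ← Psi0]
  have hPsiPsi : Psi0 Y X₁ X₂ * Psi0 Y X₁ X₂ = (T : ℝ)⁻¹ • Psi0 Y X₁ X₂ := by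
    rw [Psi0_mul Y X₁ X₂ hX₁ hX hGN hGL, hC1Psi, Matrix.mul_smul, ← Psi0]
  have hPsiL2 : Psi0 Y X₁ X₂ * Lam2 Y X₁ X₂ = 0 := by
    rw [hLam2, Matrix.mul_sub, hPsiL4, hPsiPsi, sub_self]
  have hPsiR : PsiR Y X₁ X₂ * LamR Y X₁ X₂ = 0 := by
    rw [PsiR, LamR, Matrix.smul_mul, Matrix.mul_smul, Matrix.sub_mul,
      annYbar_mul_annZ Y X₁ X₂ hX₁ hX hGL hZg, annM_idem hZg, sub_self, smul_zero, smul_zero]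
  have hM1L1 : M1 X₁ * Lam1 Y X₁ X₂ * M1 X₁ = Lam1 Y X₁ X₂ := by
    rw [Lam1, Matrix.mul_smul, Matrix.smul_mul]
    congr 1
    rw [← Matrix.mul_assoc, ← Matrix.mul_assoc, M1_mul_N1 X₁ X₂ hX₁ hX,
      Matrix.mul_assoc (N1 X₁ X₂ * annM (N1 X₁ X₂ * Y)), N1_mul_M1 X₁ X₂ hX₁ hX]
  have hM1L4 : M1 X₁ * Lam4 Y X₁ * M1 X₁ = Lam4 Y X₁ := by
    rw [Lam4, Matrix.mul_smul, Matrix.smul_mul]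
    congr 1
    rw [← Matrix.mul_assoc, ← Matrix.mul_assoc, hM1idem,
      Matrix.mul_assoc (M1 X₁ * annM (M1 X₁ * Y)), hM1idem]
  have hM1L2 : M1 X₁ * Lam2 Y X₁ X₂ * M1 X₁ = Lam2 Y X₁ X₂ := by
    rw [hLam2, Matrix.mul_sub, Matrix.sub_mul, hM1L4, M1_Psi0_M1 Y X₁ X₂ hX₁ hX hGN hGL]
  have hM1L3 : M1 X₁ * Lam3 Y X₁ X₂ * M1 X₁ = Lam3 Y X₁ X₂ := by
    rw [Lam3, Matrix.mul_smul, Matrix.smul_mul]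
    congr 1
    rw [← Matrix.mul_assoc, ← Matrix.mul_assoc, ← Matrix.mul_assoc, hM1idem,
      Matrix.mul_assoc (M1 X₁ * (N2 Y X₁ X₂)ᵀ * N2 Y X₁ X₂), hM1idem]
  exact ⟨hLam2, hC1L1, hC1L2, hPsiL1, hPsiL2, hPsiR, hC1L4, hPsiL4, hM1L1, hM1L2, hM1L3, hM1L4⟩
end

section
/- Under the rank condition, each of the matrices T·Ψ₀, T·Λ₁, T·Λ₂, T·Λ₄, T·Ψ_R and T·Λ_R is symmetric and idempotent. -/
open Matrix

variable {T G k₁ k₂ : ℕ}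

set_option linter.unusedSectionVars false
set_option maxHeartbeats 1600000
section MyAux

variable {T G k₁ k₂ : ℕ} {ι κ : Type*} [Fintype ι] [DecidableEq ι] [Fintype κ] [DecidableEq κ]

lemma my_inj (A : Matrix (Fin T) ι ℝ) (h : A.rank = Fintype.card ι) :
    ∀ v, A *ᵥ v = 0 → v = 0 := by
  rw [← Matrix.ker_mulVecLin_eq_bot_iff]
  have h2 := LinearMap.finrank_range_add_finrank_ker A.mulVecLin
  rw [Matrix.rank] at h
  rw [h, Module.finrank_pi] at h2
  have h0 : Module.finrank ℝ (LinearMap.ker A.mulVecLin) = 0 := by omega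
  exact Submodule.finrank_eq_zero.mp h0

lemma my_unit (A : Matrix (Fin T) ι ℝ) (h : ∀ v, A *ᵥ v = 0 → v = 0) :
    IsUnit (Aᵀ * A) := by
  rw [← Matrix.mulVec_injective_iff_isUnit]
  have hker : LinearMap.ker (Aᵀ * A).mulVecLin = ⊥ := by
    rw [Matrix.ker_mulVecLin_transpose_mul_self, Matrix.ker_mulVecLin_eq_bot_iff]
    exact h
  exact fun v w hvw => LinearMap.ker_eq_bot.mp hker hvw

lemma projM_t (A : Matrix (Fin T) ι ℝ) : (projM A)ᵀ = projM A := by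
  unfold projM
  rw [transpose_mul, transpose_mul, transpose_nonsing_inv, transpose_mul,
    transpose_transpose, Matrix.mul_assoc]

lemma projM_assoc (A : Matrix (Fin T) ι ℝ) : projM A = A * ((Aᵀ * A)⁻¹ * Aᵀ) := by
  rw [projM, Matrix.mul_assoc]

lemma projM_mulVec (A : Matrix (Fin T) ι ℝ) (u : Fin T → ℝ) :
    projM A *ᵥ u = A *ᵥ ((Aᵀ * A)⁻¹ *ᵥ (Aᵀ *ᵥ u)) := by
  rw [projM, Matrix.mulVec_mulVec, Matrix.mulVec_mulVec]

lemma projM_m' {A : Matrix (Fin T) ι ℝ} (hu : IsUnit (Aᵀ * A)) : projM A * A = A := by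
  unfold projM
  rw [Matrix.mul_assoc, Matrix.mul_assoc,
    Matrix.nonsing_inv_mul _ ((Matrix.isUnit_iff_isUnit_det _).mp hu), Matrix.mul_one]

lemma projM_pp' {A : Matrix (Fin T) ι ℝ} {B : Matrix (Fin T) κ ℝ}
    (h : projM B * A = A) : projM B * projM A = projM A := by
  rw [projM_assoc A, ← Matrix.mul_assoc, h]

lemma projM_idem' {A : Matrix (Fin T) ι ℝ} (hu : IsUnit (Aᵀ * A)) :
    projM A * projM A = projM A := projM_pp' (projM_m' hu)

lemma annM_t (A : Matrix (Fin T) ι ℝ) : (annM A)ᵀ = annM A := by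
  rw [annM, transpose_sub, transpose_one, projM_t]

lemma annM_idem_s10 {A : Matrix (Fin T) ι ℝ} (hu : IsUnit (Aᵀ * A)) :
    annM A * annM A = annM A := by
  rw [annM, Matrix.sub_mul, Matrix.mul_sub, Matrix.mul_sub, Matrix.one_mul, Matrix.one_mul,
    Matrix.mul_one, projM_idem' hu]
  abel

lemma proj_diff_idem {A : Matrix (Fin T) ι ℝ} {B : Matrix (Fin T) κ ℝ}
    (hu : IsUnit (Aᵀ * A)) (hv : IsUnit (Bᵀ * B)) (h : projM B * A = A) :
    (projM B - projM A) * (projM B - projM A) = projM B - projM A := by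
  have h1 : projM B * projM A = projM A := projM_pp' h
  have h2 : projM A * projM B = projM A := by
    have := congrArg Matrix.transpose h1
    rwa [transpose_mul, projM_t, projM_t] at this
  rw [Matrix.sub_mul, Matrix.mul_sub, Matrix.mul_sub, projM_idem' hu, projM_idem' hv, h1, h2]
  abel

lemma my_B (U V : Matrix (Fin T) ι ℝ) (hUV : Uᵀ * V = 0) (hVU : Vᵀ * U = 0) :
    (U + V)ᵀ * (U + V) = Uᵀ * U + Vᵀ * V := by
  rw [transpose_add, Matrix.add_mul, Matrix.mul_add, Matrix.mul_add, hUV, hVU]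
  abel

lemma key1 (U V : Matrix (Fin T) ι ℝ) (hUV : Uᵀ * V = 0) (hVU : Vᵀ * U = 0)
    (uA : IsUnit (Uᵀ * U)) (uW : IsUnit (Vᵀ * V)) (uB : IsUnit ((U + V)ᵀ * (U + V))) :
    (U * (Uᵀ * U)⁻¹ - (U + V) * ((U + V)ᵀ * (U + V))⁻¹) *
      ((U + V)ᵀ * (U + V) * ((Vᵀ * V)⁻¹ * (Uᵀ * U *
        ((Uᵀ * U)⁻¹ * Uᵀ - ((U + V)ᵀ * (U + V))⁻¹ * (U + V)ᵀ)))) =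
    projM U + projM V - projM (U + V) := by
  have pU := projM_assoc U
  have pV := projM_assoc V
  have pUV := projM_assoc (U + V)
  rw [pU, pV, pUV]
  set A := Uᵀ * U with hA
  set W := Vᵀ * V with hW
  set B := (U + V)ᵀ * (U + V) with hB
  have hBAW : B = A + W := my_B U V hUV hVU
  have hA' : A = B - W := by rw [hBAW]; abel
  have dA : IsUnit A.det := (Matrix.isUnit_iff_isUnit_det _).mp uA
  have dW : IsUnit W.det := (Matrix.isUnit_iff_isUnit_det _).mp uW
  have dB : IsUnit B.det := (Matrix.isUnit_iff_isUnit_det _).mp uB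
  have c2 : ∀ D : Matrix ι (Fin T) ℝ,
      B * (W⁻¹ * (A * (B⁻¹ * D))) = B * (W⁻¹ * D) - D := by
    intro D
    rw [hA', Matrix.sub_mul, Matrix.mul_nonsing_inv_cancel_left B D dB,
      Matrix.mul_sub W⁻¹, Matrix.nonsing_inv_mul_cancel_left W (B⁻¹ * D) dW,
      Matrix.mul_sub B, Matrix.mul_nonsing_inv_cancel_left B D dB]
  have c3 : ∀ E : Matrix ι (Fin T) ℝ, A⁻¹ * (B * E) = E + A⁻¹ * (W * E) := by
    intro E
    rw [hBAW, Matrix.add_mul, Matrix.mul_add, Matrix.nonsing_inv_mul_cancel_left A E dA]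
  have step1 : B * (W⁻¹ * (A * (A⁻¹ * Uᵀ - B⁻¹ * (U + V)ᵀ))) =
      Uᵀ + Vᵀ - B * (W⁻¹ * Vᵀ) := by
    rw [Matrix.mul_sub A, Matrix.mul_nonsing_inv_cancel_left A Uᵀ dA,
      ← Matrix.mul_assoc A B⁻¹ ((U + V)ᵀ)]
    rw [Matrix.mul_sub W⁻¹, Matrix.mul_sub B, Matrix.mul_assoc A B⁻¹ ((U + V)ᵀ),
      c2 ((U + V)ᵀ), transpose_add, Matrix.mul_add W⁻¹, Matrix.mul_add B]
    abel
  rw [step1]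
  have t1 : (U * A⁻¹) * (Uᵀ + Vᵀ - B * (W⁻¹ * Vᵀ)) =
      U * (A⁻¹ * Uᵀ) - U * (W⁻¹ * Vᵀ) := by
    rw [Matrix.mul_sub, Matrix.mul_add, Matrix.mul_assoc U A⁻¹ Uᵀ,
      Matrix.mul_assoc U A⁻¹ Vᵀ, Matrix.mul_assoc U A⁻¹ (B * (W⁻¹ * Vᵀ)),
      c3 (W⁻¹ * Vᵀ), Matrix.mul_nonsing_inv_cancel_left W Vᵀ dW, Matrix.mul_add U]
    abel
  have t2 : ((U + V) * B⁻¹) * (Uᵀ + Vᵀ - B * (W⁻¹ * Vᵀ)) =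
      (U + V) * (B⁻¹ * (U + V)ᵀ) - (U * (W⁻¹ * Vᵀ) + V * (W⁻¹ * Vᵀ)) := by
    rw [Matrix.mul_sub, Matrix.mul_assoc (U + V) B⁻¹ (B * (W⁻¹ * Vᵀ)),
      Matrix.nonsing_inv_mul_cancel_left B (W⁻¹ * Vᵀ) dB,
      Matrix.mul_assoc (U + V) B⁻¹ (Uᵀ + Vᵀ), ← transpose_add,
      Matrix.add_mul U V (W⁻¹ * Vᵀ)]
  rw [Matrix.sub_mul, t1, t2]
  abel

lemma absorb_left {N : Matrix (Fin T) (Fin T) ℝ} {U : Matrix (Fin T) ι ℝ}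
    (hNU : N * U = U) : N * projM U = projM U := by
  rw [projM, ← Matrix.mul_assoc, ← Matrix.mul_assoc, hNU]

lemma absorb_right {N : Matrix (Fin T) (Fin T) ℝ} {U : Matrix (Fin T) ι ℝ}
    (hNt : Nᵀ = N) (hNU : N * U = U) : projM U * N = projM U := by
  have h := congrArg Matrix.transpose (absorb_left hNU)
  rwa [transpose_mul, projM_t, hNt] at h

lemma sandwich {N : Matrix (Fin T) (Fin T) ℝ} {U : Matrix (Fin T) ι ℝ}
    (hNN : N * N = N) (hNt : Nᵀ = N) (hNU : N * U = U) :
    N * annM U * N = N - projM U := by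
  rw [annM, Matrix.mul_sub, Matrix.mul_one, absorb_left hNU, Matrix.sub_mul, hNN,
    absorb_right hNt hNU]

lemma sub_proj_idem {N : Matrix (Fin T) (Fin T) ℝ} {U : Matrix (Fin T) ι ℝ}
    (hNN : N * N = N) (hNt : Nᵀ = N) (hNU : N * U = U) (uU : IsUnit (Uᵀ * U)) :
    (N - projM U) * (N - projM U) = N - projM U := by
  rw [Matrix.sub_mul, Matrix.mul_sub, Matrix.mul_sub, hNN, absorb_left hNU,
    absorb_right hNt hNU, projM_idem' uU]
  abel

lemma proj_orth {U : Matrix (Fin T) ι ℝ} {V : Matrix (Fin T) κ ℝ}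
    (hUV : Uᵀ * V = 0) : projM U * projM V = 0 := by
  simp only [projM, Matrix.mul_assoc]
  rw [← Matrix.mul_assoc Uᵀ V, hUV]
  simp

lemma sandwich2 {N : Matrix (Fin T) (Fin T) ℝ} {U V : Matrix (Fin T) ι ℝ}
    (hNN : N * N = N) (hNt : Nᵀ = N) (hNU : N * U = U) (hNV : N * V = V) :
    N * (1 - projM U - projM V) * N = N - projM U - projM V := by
  rw [Matrix.mul_sub, Matrix.mul_sub, Matrix.mul_one, absorb_left hNU, absorb_left hNV,
    Matrix.sub_mul, Matrix.sub_mul, hNN, absorb_right hNt hNU, absorb_right hNt hNV]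

lemma sub_proj2_idem {N : Matrix (Fin T) (Fin T) ℝ} {U V : Matrix (Fin T) ι ℝ}
    (hNN : N * N = N) (hNt : Nᵀ = N) (hNU : N * U = U) (hNV : N * V = V)
    (hUV : Uᵀ * V = 0) (hVU : Vᵀ * U = 0)
    (uU : IsUnit (Uᵀ * U)) (uV : IsUnit (Vᵀ * V)) :
    (N - projM U - projM V) * (N - projM U - projM V) = N - projM U - projM V := by
  rw [Matrix.sub_mul, Matrix.sub_mul, Matrix.mul_sub, Matrix.mul_sub, Matrix.mul_sub,
    Matrix.mul_sub, Matrix.mul_sub, Matrix.mul_sub, hNN, absorb_left hNU, absorb_left hNV,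
    absorb_right hNt hNU, absorb_right hNt hNV, projM_idem' uU, projM_idem' uV,
    proj_orth hUV, proj_orth hVU]
  abel

lemma psi_idem (U V : Matrix (Fin T) ι ℝ) (hUV : Uᵀ * V = 0) (hVU : Vᵀ * U = 0)
    (uU : IsUnit (Uᵀ * U)) (uV : IsUnit (Vᵀ * V)) (uB : IsUnit ((U + V)ᵀ * (U + V))) :
    (projM U + projM V - projM (U + V)) * (projM U + projM V - projM (U + V)) =
      projM U + projM V - projM (U + V) := by
  have dU : IsUnit (Uᵀ * U).det := (Matrix.isUnit_iff_isUnit_det _).mp uU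
  have dV : IsUnit (Vᵀ * V).det := (Matrix.isUnit_iff_isUnit_det _).mp uV
  have dB : IsUnit ((U + V)ᵀ * (U + V)).det := (Matrix.isUnit_iff_isUnit_det _).mp uB
  have hUtUV : Uᵀ * (U + V) = Uᵀ * U := by rw [Matrix.mul_add, hUV, add_zero]
  have hVtUV : Vᵀ * (U + V) = Vᵀ * V := by rw [Matrix.mul_add, hVU, zero_add]
  have hUVtU : (U + V)ᵀ * U = Uᵀ * U := by
    rw [transpose_add, Matrix.add_mul, hVU, add_zero]
  have hUVtV : (U + V)ᵀ * V = Vᵀ * V := by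
    rw [transpose_add, Matrix.add_mul, hUV, zero_add]
  have e13 : projM U * projM (U + V) = U * (((U + V)ᵀ * (U + V))⁻¹ * (U + V)ᵀ) := by
    simp only [projM, Matrix.mul_assoc]
    rw [← Matrix.mul_assoc Uᵀ (U + V), hUtUV,
      Matrix.nonsing_inv_mul_cancel_left (Uᵀ * U) _ dU]
  have e23 : projM V * projM (U + V) = V * (((U + V)ᵀ * (U + V))⁻¹ * (U + V)ᵀ) := by
    simp only [projM, Matrix.mul_assoc]
    rw [← Matrix.mul_assoc Vᵀ (U + V), hVtUV,
      Matrix.nonsing_inv_mul_cancel_left (Vᵀ * V) _ dV]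
  have e31 : projM (U + V) * projM U = (U + V) * (((U + V)ᵀ * (U + V))⁻¹ * Uᵀ) := by
    simp only [projM, Matrix.mul_assoc]
    rw [← Matrix.mul_assoc ((U + V)ᵀ) U, hUVtU,
      Matrix.mul_nonsing_inv_cancel_left (Uᵀ * U) Uᵀ dU]
  have e32 : projM (U + V) * projM V = (U + V) * (((U + V)ᵀ * (U + V))⁻¹ * Vᵀ) := by
    simp only [projM, Matrix.mul_assoc]
    rw [← Matrix.mul_assoc ((U + V)ᵀ) V, hUVtV,
      Matrix.mul_nonsing_inv_cancel_left (Vᵀ * V) Vᵀ dV]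
  have sum31_32 : (U + V) * (((U + V)ᵀ * (U + V))⁻¹ * Uᵀ) +
      (U + V) * (((U + V)ᵀ * (U + V))⁻¹ * Vᵀ) = projM (U + V) := by
    rw [← Matrix.mul_add, ← Matrix.mul_add, ← transpose_add, ← projM_assoc]
  have colU : (projM U + projM V - projM (U + V)) * projM U =
      projM U - (U + V) * (((U + V)ᵀ * (U + V))⁻¹ * Uᵀ) := by
    rw [Matrix.sub_mul, Matrix.add_mul, projM_idem' uU, proj_orth hVU, e31]
    abel
  have colV : (projM U + projM V - projM (U + V)) * projM V =
      projM V - (U + V) * (((U + V)ᵀ * (U + V))⁻¹ * Vᵀ) := by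
    rw [Matrix.sub_mul, Matrix.add_mul, proj_orth hUV, projM_idem' uV, e32]
    abel
  have colUV : (projM U + projM V - projM (U + V)) * projM (U + V) = 0 := by
    rw [Matrix.sub_mul, Matrix.add_mul, e13, e23, projM_idem' uB,
      ← Matrix.add_mul U V (((U + V)ᵀ * (U + V))⁻¹ * (U + V)ᵀ), ← projM_assoc]
    abel
  rw [Matrix.mul_sub, Matrix.mul_add, colU, colV, colUV, ← sum31_32]
  abel

lemma fromColumns_add' (A C : Matrix (Fin T) ι ℝ) (B D : Matrix (Fin T) κ ℝ) :
    fromCols A B + fromCols C D = fromCols (A + C) (B + D) := by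
  ext i j
  cases j <;> simp [fromCols]

end MyAux

/-- Under the rank condition, each of `TΨ₀`, `TΛ₁`, `TΛ₂`, `TΛ₄`, `TΨ_R` and `TΛ_R`
is symmetric and idempotent. -/
theorem stmt10 {T G k₁ k₂ : ℕ}
    (hT : 0 < T) (hG : 0 < G) (hk₁ : 0 < k₁) (hk₂ : 0 < k₂)
    (Y : Matrix (Fin T) (Fin G) ℝ)
    (X₁ : Matrix (Fin T) (Fin k₁) ℝ) (X₂ : Matrix (Fin T) (Fin k₂) ℝ)
    (hrank : RankCond Y X₁ X₂) :
    ((T : ℝ) • Psi0 Y X₁ X₂).IsSymm ∧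
    ((T : ℝ) • Psi0 Y X₁ X₂) * ((T : ℝ) • Psi0 Y X₁ X₂) = (T : ℝ) • Psi0 Y X₁ X₂ ∧
    ((T : ℝ) • Lam1 Y X₁ X₂).IsSymm ∧
    ((T : ℝ) • Lam1 Y X₁ X₂) * ((T : ℝ) • Lam1 Y X₁ X₂) = (T : ℝ) • Lam1 Y X₁ X₂ ∧
    ((T : ℝ) • Lam2 Y X₁ X₂).IsSymm ∧
    ((T : ℝ) • Lam2 Y X₁ X₂) * ((T : ℝ) • Lam2 Y X₁ X₂) = (T : ℝ) • Lam2 Y X₁ X₂ ∧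
    ((T : ℝ) • Lam4 Y X₁).IsSymm ∧
    ((T : ℝ) • Lam4 Y X₁) * ((T : ℝ) • Lam4 Y X₁) = (T : ℝ) • Lam4 Y X₁ ∧
    ((T : ℝ) • PsiR Y X₁ X₂).IsSymm ∧
    ((T : ℝ) • PsiR Y X₁ X₂) * ((T : ℝ) • PsiR Y X₁ X₂) = (T : ℝ) • PsiR Y X₁ X₂ ∧
    ((T : ℝ) • LamR Y X₁ X₂).IsSymm ∧
    ((T : ℝ) • LamR Y X₁ X₂) * ((T : ℝ) • LamR Y X₁ X₂) = (T : ℝ) • LamR Y X₁ X₂ := by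
  obtain ⟨hr1, hr2, hr3, hr4⟩ := hrank
  have hTne : (T : ℝ) ≠ 0 := Nat.cast_ne_zero.mpr hT.ne'
  have hsmul : ∀ S : Matrix (Fin T) (Fin T) ℝ, (T : ℝ) • ((T : ℝ)⁻¹ • S) = S := by
    intro S; rw [smul_smul, mul_inv_cancel₀ hTne, one_smul]
  -- injectivity from ranks
  have ivX1 : ∀ v, X₁ *ᵥ v = 0 → v = 0 := my_inj X₁ (by simpa using hr1)
  have ivX : ∀ v, fromCols X₁ X₂ *ᵥ v = 0 → v = 0 := my_inj _ (by simpa using hr2)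
  have ivZ : ∀ v, fromCols Y (fromCols X₁ X₂) *ᵥ v = 0 → v = 0 :=
    my_inj _ (by simpa using hr3)
  have ivPY : ∀ v, fromCols (Pm X₁ X₂ * Y) X₁ *ᵥ v = 0 → v = 0 :=
    my_inj _ (by simpa using hr4)
  have uX1 : IsUnit (X₁ᵀ * X₁) := my_unit _ ivX1
  have uX : IsUnit ((fromCols X₁ X₂)ᵀ * fromCols X₁ X₂) := my_unit _ ivX
  -- definitional unfoldings
  have dPm : Pm X₁ X₂ = projM (fromCols X₁ X₂) := rfl
  have dM1 : M1 X₁ = 1 - projM X₁ := rfl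
  have dMm : Mm X₁ X₂ = 1 - Pm X₁ X₂ := rfl
  have dN1 : N1 X₁ X₂ = M1 X₁ * Pm X₁ X₂ := rfl
  -- projector algebra
  have hfac : fromCols X₁ X₂ * fromRows (1 : Matrix (Fin k₁) (Fin k₁) ℝ)
      (0 : Matrix (Fin k₂) (Fin k₁) ℝ) = X₁ := by
    rw [fromCols_mul_fromRows, Matrix.mul_one, Matrix.mul_zero, add_zero]
  have hP1t : (projM X₁)ᵀ = projM X₁ := projM_t X₁
  have hP1i : projM X₁ * projM X₁ = projM X₁ := projM_idem' uX1
  have hPpt : (Pm X₁ X₂)ᵀ = Pm X₁ X₂ := by rw [dPm]; exact projM_t _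
  have hPpi : Pm X₁ X₂ * Pm X₁ X₂ = Pm X₁ X₂ := by rw [dPm]; exact projM_idem' uX
  have hPpX1 : Pm X₁ X₂ * X₁ = X₁ := by
    calc Pm X₁ X₂ * X₁
        = Pm X₁ X₂ * (fromCols X₁ X₂ * (fromRows (1 : Matrix (Fin k₁) (Fin k₁) ℝ) (0 : Matrix (Fin k₂) (Fin k₁) ℝ))) := by rw [hfac]
      _ = (Pm X₁ X₂ * fromCols X₁ X₂) * (fromRows (1 : Matrix (Fin k₁) (Fin k₁) ℝ) (0 : Matrix (Fin k₂) (Fin k₁) ℝ)) := by rw [Matrix.mul_assoc]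
      _ = fromCols X₁ X₂ * (fromRows (1 : Matrix (Fin k₁) (Fin k₁) ℝ) (0 : Matrix (Fin k₂) (Fin k₁) ℝ)) := by rw [dPm, projM_m' uX]
      _ = X₁ := hfac
  have hPpP1 : Pm X₁ X₂ * projM X₁ = projM X₁ := by
    rw [dPm]; exact projM_pp' (by rw [← dPm]; exact hPpX1)
  have hP1Pp : projM X₁ * Pm X₁ X₂ = projM X₁ := by
    have h := congrArg Matrix.transpose hPpP1
    rwa [transpose_mul, hP1t, hPpt] at h
  have hQrep : N1 X₁ X₂ = Pm X₁ X₂ - projM X₁ := by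
    rw [dN1, dM1, Matrix.sub_mul, Matrix.one_mul, hP1Pp]
  have hQt : (N1 X₁ X₂)ᵀ = N1 X₁ X₂ := by
    rw [hQrep, transpose_sub, hPpt, hP1t]
  have hQi : N1 X₁ X₂ * N1 X₁ X₂ = N1 X₁ X₂ := by
    rw [hQrep, Matrix.sub_mul, Matrix.mul_sub, Matrix.mul_sub, hPpi, hP1i, hPpP1, hP1Pp]
    abel
  have hM1t : (M1 X₁)ᵀ = M1 X₁ := annM_t X₁
  have hM1i : M1 X₁ * M1 X₁ = M1 X₁ := annM_idem_s10 uX1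
  have hMmt : (Mm X₁ X₂)ᵀ = Mm X₁ X₂ := annM_t _
  have hMmi : Mm X₁ X₂ * Mm X₁ X₂ = Mm X₁ X₂ := annM_idem_s10 uX
  have hM1split : M1 X₁ = N1 X₁ X₂ + Mm X₁ X₂ := by
    rw [hQrep, dMm, dM1, dPm]; abel
  have hQMm : N1 X₁ X₂ * Mm X₁ X₂ = 0 := by
    rw [hQrep, dMm, Matrix.sub_mul, Matrix.mul_sub, Matrix.mul_sub, Matrix.mul_one,
      Matrix.mul_one, hPpi, hP1Pp]
    abel
  have hM1N1 : M1 X₁ * N1 X₁ X₂ = N1 X₁ X₂ := by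
    rw [hQrep, dM1, Matrix.sub_mul, Matrix.one_mul, Matrix.mul_sub, hP1Pp, hP1i]
    abel
  have hM1Mm : M1 X₁ * Mm X₁ X₂ = Mm X₁ X₂ := by
    rw [dM1, dMm, Matrix.sub_mul, Matrix.one_mul, Matrix.mul_sub, Matrix.mul_one, hP1Pp]
    abel
  -- U := N1 X₁ X₂ * Y,  V := Mm X₁ X₂ * Y
  have hUplusV : M1 X₁ * Y = N1 X₁ X₂ * Y + Mm X₁ X₂ * Y := by
    rw [hM1split, Matrix.add_mul]
  have hUV : (N1 X₁ X₂ * Y)ᵀ * (Mm X₁ X₂ * Y) = 0 := by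
    rw [transpose_mul, hQt, Matrix.mul_assoc,
      ← Matrix.mul_assoc (N1 X₁ X₂) (Mm X₁ X₂) Y, hQMm, Matrix.zero_mul,
      Matrix.mul_zero]
  have hVU : (Mm X₁ X₂ * Y)ᵀ * (N1 X₁ X₂ * Y) = 0 := by
    have h := congrArg Matrix.transpose hUV
    rwa [transpose_mul, transpose_transpose, transpose_zero] at h
  have hM1U : M1 X₁ * (N1 X₁ X₂ * Y) = N1 X₁ X₂ * Y := by
    rw [← Matrix.mul_assoc, hM1N1]
  have hM1V : M1 X₁ * (Mm X₁ X₂ * Y) = Mm X₁ X₂ * Y := by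
    rw [← Matrix.mul_assoc, hM1Mm]
  have hQU : N1 X₁ X₂ * (N1 X₁ X₂ * Y) = N1 X₁ X₂ * Y := by
    rw [← Matrix.mul_assoc, hQi]
  have hM1MY : M1 X₁ * (M1 X₁ * Y) = M1 X₁ * Y := by
    rw [← Matrix.mul_assoc, hM1i]
  have eA : (N1 X₁ X₂ * Y)ᵀ * (N1 X₁ X₂ * Y) = Yᵀ * N1 X₁ X₂ * Y := by
    rw [transpose_mul, hQt, Matrix.mul_assoc Yᵀ (N1 X₁ X₂) (N1 X₁ X₂ * Y), hQU,
      ← Matrix.mul_assoc]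
  have eW : (Mm X₁ X₂ * Y)ᵀ * (Mm X₁ X₂ * Y) = Yᵀ * Mm X₁ X₂ * Y := by
    have hMmV : Mm X₁ X₂ * (Mm X₁ X₂ * Y) = Mm X₁ X₂ * Y := by
      rw [← Matrix.mul_assoc, hMmi]
    rw [transpose_mul, hMmt, Matrix.mul_assoc Yᵀ (Mm X₁ X₂) (Mm X₁ X₂ * Y), hMmV,
      ← Matrix.mul_assoc]
  have eB : (M1 X₁ * Y)ᵀ * (M1 X₁ * Y) = Yᵀ * M1 X₁ * Y := by
    rw [transpose_mul, hM1t, Matrix.mul_assoc Yᵀ (M1 X₁) (M1 X₁ * Y), hM1MY,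
      ← Matrix.mul_assoc]
  have eB' : (N1 X₁ X₂ * Y + Mm X₁ X₂ * Y)ᵀ * (N1 X₁ X₂ * Y + Mm X₁ X₂ * Y) =
      Yᵀ * M1 X₁ * Y := by rw [← hUplusV]; exact eB
  have eUt : (N1 X₁ X₂ * Y)ᵀ = Yᵀ * N1 X₁ X₂ := by rw [transpose_mul, hQt]
  have eMt : (N1 X₁ X₂ * Y + Mm X₁ X₂ * Y)ᵀ = Yᵀ * M1 X₁ := by
    rw [← hUplusV, transpose_mul, hM1t]
  -- injectivity of U, V, M1*Y
  have ivV : ∀ v, (Mm X₁ X₂ * Y) *ᵥ v = 0 → v = 0 := by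
    intro v hv
    rw [← Matrix.mulVec_mulVec] at hv
    rw [dMm, Matrix.sub_mulVec, Matrix.one_mulVec, sub_eq_zero] at hv
    set w := ((fromCols X₁ X₂)ᵀ * fromCols X₁ X₂)⁻¹ *ᵥ
      ((fromCols X₁ X₂)ᵀ *ᵥ (Y *ᵥ v)) with hw
    have h3 : Y *ᵥ v = fromCols X₁ X₂ *ᵥ w := by
      rw [hv, dPm, projM_mulVec]
    have h4 : fromCols Y (fromCols X₁ X₂) *ᵥ Sum.elim v (-w) = 0 := by
      rw [fromCols_mulVec_sumElim, Matrix.mulVec_neg, ← h3, add_neg_cancel]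
    have h5 := ivZ _ h4
    funext i
    exact congrFun h5 (Sum.inl i)
  have ivMY : ∀ v, (M1 X₁ * Y) *ᵥ v = 0 → v = 0 := by
    intro v hv
    rw [← Matrix.mulVec_mulVec] at hv
    rw [dM1, Matrix.sub_mulVec, Matrix.one_mulVec, sub_eq_zero] at hv
    set w := (X₁ᵀ * X₁)⁻¹ *ᵥ (X₁ᵀ *ᵥ (Y *ᵥ v)) with hw
    have h3 : Y *ᵥ v = X₁ *ᵥ w := by rw [hv, projM_mulVec]
    have h4 : fromCols Y (fromCols X₁ X₂) *ᵥ
        Sum.elim v (Sum.elim (-w) (0 : Fin k₂ → ℝ)) = 0 := by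
      rw [fromCols_mulVec_sumElim, fromCols_mulVec_sumElim, Matrix.mulVec_neg,
        Matrix.mulVec_zero, add_zero, ← h3, add_neg_cancel]
    have h5 := ivZ _ h4
    funext i
    exact congrFun h5 (Sum.inl i)
  have ivU : ∀ v, (N1 X₁ X₂ * Y) *ᵥ v = 0 → v = 0 := by
    intro v hv
    have hrw : N1 X₁ X₂ * Y = M1 X₁ * (Pm X₁ X₂ * Y) := by
      rw [dN1, Matrix.mul_assoc]
    rw [hrw, ← Matrix.mulVec_mulVec] at hv
    rw [dM1, Matrix.sub_mulVec, Matrix.one_mulVec, sub_eq_zero] at hv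
    set w := (X₁ᵀ * X₁)⁻¹ *ᵥ (X₁ᵀ *ᵥ ((Pm X₁ X₂ * Y) *ᵥ v)) with hw
    have h3 : (Pm X₁ X₂ * Y) *ᵥ v = X₁ *ᵥ w := by rw [hv, projM_mulVec]
    have h4 : fromCols (Pm X₁ X₂ * Y) X₁ *ᵥ Sum.elim v (-w) = 0 := by
      rw [fromCols_mulVec_sumElim, Matrix.mulVec_neg, ← h3, add_neg_cancel]
    have h5 := ivPY _ h4
    funext i
    exact congrFun h5 (Sum.inl i)
  -- units of the G×G matrices
  have uAU : IsUnit ((N1 X₁ X₂ * Y)ᵀ * (N1 X₁ X₂ * Y)) := my_unit _ ivU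
  have uWV : IsUnit ((Mm X₁ X₂ * Y)ᵀ * (Mm X₁ X₂ * Y)) := my_unit _ ivV
  have uBM : IsUnit ((N1 X₁ X₂ * Y + Mm X₁ X₂ * Y)ᵀ * (N1 X₁ X₂ * Y + Mm X₁ X₂ * Y)) := by
    rw [← hUplusV]; exact my_unit _ ivMY
  have uA : IsUnit (Yᵀ * N1 X₁ X₂ * Y) := by rw [← eA]; exact uAU
  have uW : IsUnit (Yᵀ * Mm X₁ X₂ * Y) := by rw [← eW]; exact uWV
  have uB : IsUnit (Yᵀ * M1 X₁ * Y) := by rw [← eB]; exact my_unit _ ivMY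
  have dAd : IsUnit (Yᵀ * N1 X₁ X₂ * Y).det := (Matrix.isUnit_iff_isUnit_det _).mp uA
  have dWd : IsUnit (Yᵀ * Mm X₁ X₂ * Y).det := (Matrix.isUnit_iff_isUnit_det _).mp uW
  have dBd : IsUnit (Yᵀ * M1 X₁ * Y).det := (Matrix.isUnit_iff_isUnit_det _).mp uB
  -- inverses of OmIV, OmLS, Dhat
  have hBAWn : Yᵀ * M1 X₁ * Y = Yᵀ * N1 X₁ X₂ * Y + Yᵀ * Mm X₁ X₂ * Y := by
    rw [hM1split, Matrix.mul_add Yᵀ, Matrix.add_mul]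
  have hOmIV : (OmIV Y X₁ X₂)⁻¹ = (T : ℝ) • (Yᵀ * N1 X₁ X₂ * Y)⁻¹ := by
    apply Matrix.inv_eq_right_inv
    simp only [OmIV]
    rw [smul_mul_assoc, mul_smul_comm, smul_smul, inv_mul_cancel₀ hTne, one_smul,
      Matrix.mul_nonsing_inv _ dAd]
  have hOmLS : (OmLS Y X₁)⁻¹ = (T : ℝ) • (Yᵀ * M1 X₁ * Y)⁻¹ := by
    apply Matrix.inv_eq_right_inv
    simp only [OmLS]
    rw [smul_mul_assoc, mul_smul_comm, smul_smul, inv_mul_cancel₀ hTne, one_smul,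
      Matrix.mul_nonsing_inv _ dBd]
  have hDhat : Dhat Y X₁ X₂ =
      (T : ℝ) • ((Yᵀ * N1 X₁ X₂ * Y)⁻¹ - (Yᵀ * M1 X₁ * Y)⁻¹) := by
    simp only [Dhat]
    rw [hOmIV, hOmLS, smul_sub]
  have hDinv : (Dhat Y X₁ X₂)⁻¹ = (T : ℝ)⁻¹ •
      (Yᵀ * M1 X₁ * Y * ((Yᵀ * Mm X₁ X₂ * Y)⁻¹ * (Yᵀ * N1 X₁ X₂ * Y))) := by
    apply Matrix.inv_eq_right_inv
    rw [hDhat, smul_mul_assoc, mul_smul_comm, smul_smul, mul_inv_cancel₀ hTne, one_smul]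
    rw [Matrix.sub_mul, Matrix.nonsing_inv_mul_cancel_left _ _ dBd, hBAWn,
      Matrix.add_mul, Matrix.mul_add,
      Matrix.nonsing_inv_mul_cancel_left _ _ dAd,
      Matrix.mul_nonsing_inv_cancel_left _ _ dWd,
      Matrix.nonsing_inv_mul _ dAd]
    abel
  -- representation of C1
  have sAt : ∀ M : Matrix (Fin T) (Fin G) ℝ, (Mᵀ * M)ᵀ = Mᵀ * M := by
    intro M; rw [transpose_mul, transpose_transpose]
  have hC1U : C1 Y X₁ X₂ =
      ((N1 X₁ X₂ * Y)ᵀ * (N1 X₁ X₂ * Y))⁻¹ * (N1 X₁ X₂ * Y)ᵀ -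
      ((N1 X₁ X₂ * Y + Mm X₁ X₂ * Y)ᵀ * (N1 X₁ X₂ * Y + Mm X₁ X₂ * Y))⁻¹ *
        (N1 X₁ X₂ * Y + Mm X₁ X₂ * Y)ᵀ := by
    simp only [C1, B2, B1]
    rw [eA, eB', eUt, eMt]
  have hC1tU : (C1 Y X₁ X₂)ᵀ =
      (N1 X₁ X₂ * Y) * ((N1 X₁ X₂ * Y)ᵀ * (N1 X₁ X₂ * Y))⁻¹ -
      (N1 X₁ X₂ * Y + Mm X₁ X₂ * Y) *
        ((N1 X₁ X₂ * Y + Mm X₁ X₂ * Y)ᵀ * (N1 X₁ X₂ * Y + Mm X₁ X₂ * Y))⁻¹ := by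
    rw [hC1U]
    simp only [transpose_sub, transpose_mul, transpose_transpose, transpose_nonsing_inv]
  -- the six representations
  have RPsi0 : (T : ℝ) • Psi0 Y X₁ X₂ =
      projM (N1 X₁ X₂ * Y) + projM (Mm X₁ X₂ * Y) -
        projM (N1 X₁ X₂ * Y + Mm X₁ X₂ * Y) := by
    have smulC : ∀ D : Matrix (Fin G) (Fin G) ℝ,
        (T : ℝ) • ((C1 Y X₁ X₂)ᵀ * ((T : ℝ)⁻¹ • D) * C1 Y X₁ X₂) =
          (C1 Y X₁ X₂)ᵀ * D * C1 Y X₁ X₂ := by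
      intro D
      rw [Matrix.mul_smul, Matrix.smul_mul, smul_smul, mul_inv_cancel₀ hTne, one_smul]
    simp only [Psi0]
    rw [hDinv, smulC]
    rw [hC1tU, hC1U, ← eA, ← eW, ← eB']
    have k := key1 (N1 X₁ X₂ * Y) (Mm X₁ X₂ * Y) hUV hVU uAU uWV uBM
    simp only [Matrix.mul_assoc] at k ⊢
    exact k
  have RLam1 : (T : ℝ) • Lam1 Y X₁ X₂ = N1 X₁ X₂ - projM (N1 X₁ X₂ * Y) := by
    simp only [Lam1]
    rw [hsmul]
    exact sandwich hQi hQt hQU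
  have RLam4 : (T : ℝ) • Lam4 Y X₁ = M1 X₁ - projM (M1 X₁ * Y) := by
    simp only [Lam4]
    rw [hsmul]
    exact sandwich hM1i hM1t hM1MY
  have RLam2 : (T : ℝ) • Lam2 Y X₁ X₂ =
      M1 X₁ - projM (N1 X₁ X₂ * Y) - projM (Mm X₁ X₂ * Y) := by
    have smulL : ∀ D : Matrix (Fin T) (Fin T) ℝ,
        (T : ℝ) • (M1 X₁ * D * M1 X₁) = M1 X₁ * ((T : ℝ) • D) * M1 X₁ := by
      intro D
      rw [Matrix.mul_smul, Matrix.smul_mul]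
    simp only [Lam2]
    rw [smulL, smul_sub, hsmul, RPsi0]
    have hann : annM (M1 X₁ * Y) = 1 - projM (N1 X₁ X₂ * Y + Mm X₁ X₂ * Y) := by
      rw [annM, hUplusV]
    have hin : annM (M1 X₁ * Y) -
        (projM (N1 X₁ X₂ * Y) + projM (Mm X₁ X₂ * Y) -
          projM (N1 X₁ X₂ * Y + Mm X₁ X₂ * Y)) =
        1 - projM (N1 X₁ X₂ * Y) - projM (Mm X₁ X₂ * Y) := by
      rw [hann]; abel
    rw [hin]
    exact sandwich2 hM1i hM1t hM1U hM1V
  have uZb : IsUnit ((Zfull Y X₁ X₂)ᵀ * Zfull Y X₁ X₂) := my_unit _ ivZ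
  have ivYb : ∀ v, Ybar Y X₁ *ᵥ v = 0 → v = 0 := by
    intro v hv
    rw [Ybar, ← Sum.elim_comp_inl_inr v, fromCols_mulVec_sumElim] at hv
    have h4 : fromCols Y (fromCols X₁ X₂) *ᵥ
        Sum.elim (v ∘ Sum.inl) (Sum.elim (v ∘ Sum.inr) (0 : Fin k₂ → ℝ)) = 0 := by
      rw [fromCols_mulVec_sumElim, fromCols_mulVec_sumElim, Matrix.mulVec_zero,
        add_zero, hv]
    have h5 := ivZ _ h4
    funext i
    cases i with
    | inl i => exact congrFun h5 (Sum.inl i)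
    | inr i => exact congrFun h5 (Sum.inr (Sum.inl i))
  have uYb : IsUnit ((Ybar Y X₁)ᵀ * Ybar Y X₁) := my_unit _ ivYb
  have hfac2 : Zfull Y X₁ X₂ *
      fromRows (fromCols (1 : Matrix (Fin G) (Fin G) ℝ) (0 : Matrix (Fin G) (Fin k₁) ℝ))
        (fromCols (0 : Matrix (Fin k₁ ⊕ Fin k₂) (Fin G) ℝ)
          (fromRows (1 : Matrix (Fin k₁) (Fin k₁) ℝ) (0 : Matrix (Fin k₂) (Fin k₁) ℝ))) =
      Ybar Y X₁ := by
    rw [Zfull, Ybar, fromCols_mul_fromRows, Matrix.mul_fromCols,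
      Matrix.mul_fromCols, Matrix.mul_one, Matrix.mul_zero, Matrix.mul_zero, hfac,
      fromColumns_add']
    rw [add_zero, zero_add]
  have hPZY : projM (Zfull Y X₁ X₂) * Ybar Y X₁ = Ybar Y X₁ := by
    calc projM (Zfull Y X₁ X₂) * Ybar Y X₁
        = projM (Zfull Y X₁ X₂) * (Zfull Y X₁ X₂ * (_ : Matrix (Fin G ⊕ (Fin k₁ ⊕ Fin k₂)) (Fin G ⊕ Fin k₁) ℝ)) := by rw [hfac2]
      _ = (projM (Zfull Y X₁ X₂) * Zfull Y X₁ X₂) * (_ : Matrix (Fin G ⊕ (Fin k₁ ⊕ Fin k₂)) (Fin G ⊕ Fin k₁) ℝ) := by rw [Matrix.mul_assoc]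
      _ = Zfull Y X₁ X₂ * (_ : Matrix (Fin G ⊕ (Fin k₁ ⊕ Fin k₂)) (Fin G ⊕ Fin k₁) ℝ) := by rw [projM_m' uZb]
      _ = Ybar Y X₁ := hfac2
  have RPsiR : (T : ℝ) • PsiR Y X₁ X₂ =
      projM (Zfull Y X₁ X₂) - projM (Ybar Y X₁) := by
    simp only [PsiR]
    rw [hsmul, annM, annM]
    abel
  have RLamR : (T : ℝ) • LamR Y X₁ X₂ = annM (Zfull Y X₁ X₂) := by
    simp only [LamR]
    rw [hsmul]
  refine ⟨?_, ?_, ?_, ?_, ?_, ?_, ?_, ?_, ?_, ?_, ?_, ?_⟩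
  · rw [RPsi0, Matrix.IsSymm, transpose_sub, transpose_add, projM_t, projM_t, projM_t]
  · rw [RPsi0]
    exact psi_idem _ _ hUV hVU uAU uWV uBM
  · rw [RLam1, Matrix.IsSymm, transpose_sub, hQt, projM_t]
  · rw [RLam1]
    exact sub_proj_idem hQi hQt hQU uAU
  · rw [RLam2, Matrix.IsSymm, transpose_sub, transpose_sub, hM1t, projM_t, projM_t]
  · rw [RLam2]
    exact sub_proj2_idem hM1i hM1t hM1U hM1V hUV hVU uAU uWV
  · rw [RLam4, Matrix.IsSymm, transpose_sub, hM1t, projM_t]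
  · rw [RLam4]
    exact sub_proj_idem hM1i hM1t hM1MY (by rw [eB]; exact uB)
  · rw [RPsiR, Matrix.IsSymm, transpose_sub, projM_t, projM_t]
  · rw [RPsiR]
    exact proj_diff_idem uYb uZb hPZY
  · rw [RLamR, Matrix.IsSymm, annM_t]
  · rw [RLamR]
    exact annM_idem_s10 uZb
end

section
/- Under the rank condition, the traces (equivalently, since these matrices are symmetric idempotent, the ranks) of the scaled weighting matrices are: trace(T·Ψ₀) = G, trace(T·Λ₁) = k₂ − G, trace(T·Λ₂) = T − k₁ − 2G, trace(T·Λ₄) = T − k₁ − G, trace(T·Ψ_R) = k₂, and trace(T·Λ_R) = T − k₁ − k₂ − G. -/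
open Matrix

variable {T G k₁ k₂ : ℕ}

namespace StmtAux

lemma inj_of_rank {m n : Type*} [Fintype m] [Fintype n] [DecidableEq n] (A : Matrix m n ℝ)
    (h : A.rank = Fintype.card n) : Function.Injective A.mulVec := by
  have h1 := A.mulVecLin.finrank_range_add_finrank_ker
  rw [Module.finrank_pi] at h1
  rw [Matrix.rank] at h
  have h3 : Module.finrank ℝ (LinearMap.ker A.mulVecLin) = 0 := by omega
  have h4 : LinearMap.ker A.mulVecLin = ⊥ := Submodule.finrank_eq_zero.mp h3
  have h5 : Function.Injective A.mulVecLin := LinearMap.ker_eq_bot.mp h4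
  have : A.mulVec = ⇑A.mulVecLin := by ext v i; simp [Matrix.mulVecLin_apply]
  rw [this]; exact h5

lemma gram_isUnit {m n : Type*} [Fintype m] [Fintype n] [DecidableEq n] (A : Matrix m n ℝ)
    (h : Function.Injective A.mulVec) : IsUnit (Aᵀ * A) := by
  rw [← Matrix.mulVec_injective_iff_isUnit]
  have hker : LinearMap.ker (Aᵀ * A).mulVecLin = LinearMap.ker A.mulVecLin :=
    Matrix.ker_mulVecLin_transpose_mul_self A
  intro x y hxy
  have hmem : x - y ∈ LinearMap.ker (Aᵀ * A).mulVecLin := by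
    rw [LinearMap.mem_ker, Matrix.mulVecLin_apply, Matrix.mulVec_sub, sub_eq_zero]
    exact hxy
  rw [hker, LinearMap.mem_ker, Matrix.mulVecLin_apply, Matrix.mulVec_sub, sub_eq_zero] at hmem
  exact h hmem

lemma gram_isUnit_of_rank {m n : Type*} [Fintype m] [Fintype n] [DecidableEq n]
    (A : Matrix m n ℝ) (h : A.rank = Fintype.card n) : IsUnit (Aᵀ * A) :=
  gram_isUnit A (inj_of_rank A h)

variable {n : Type*} [Fintype n] [DecidableEq n]

lemma projM_mul_base (A : Matrix (Fin T) n ℝ) (h : IsUnit (Aᵀ * A)) :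
    projM A * A = A := by
  have hd : IsUnit (Aᵀ * A).det := (Matrix.isUnit_iff_isUnit_det _).mp h
  rw [projM, Matrix.mul_assoc, Matrix.mul_assoc, Matrix.nonsing_inv_mul _ hd, Matrix.mul_one]

lemma projM_transpose (A : Matrix (Fin T) n ℝ) : (projM A)ᵀ = projM A := by
  have h1 : ((Aᵀ * A)⁻¹)ᵀ = (Aᵀ * A)⁻¹ := by
    rw [Matrix.transpose_nonsing_inv, Matrix.transpose_mul, Matrix.transpose_transpose]
  rw [projM, Matrix.transpose_mul, Matrix.transpose_mul, Matrix.transpose_transpose, h1,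
    ← Matrix.mul_assoc]

lemma projM_idem (A : Matrix (Fin T) n ℝ) (h : IsUnit (Aᵀ * A)) :
    projM A * projM A = projM A := by
  nth_rewrite 2 [projM]
  rw [← Matrix.mul_assoc, ← Matrix.mul_assoc, projM_mul_base A h, projM]

lemma trace_projM (A : Matrix (Fin T) n ℝ) (h : IsUnit (Aᵀ * A)) :
    (projM A).trace = (Fintype.card n : ℝ) := by
  have hd : IsUnit (Aᵀ * A).det := (Matrix.isUnit_iff_isUnit_det _).mp h
  rw [projM, Matrix.trace_mul_comm, ← Matrix.mul_assoc, Matrix.mul_nonsing_inv _ hd,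
    Matrix.trace_one]

lemma trace_annM (A : Matrix (Fin T) n ℝ) (h : IsUnit (Aᵀ * A)) :
    (annM A).trace = (T : ℝ) - (Fintype.card n : ℝ) := by
  rw [annM, Matrix.trace_sub, Matrix.trace_one, trace_projM A h, Fintype.card_fin]

lemma isUnit_schur {n m : Type*} [Fintype n] [Fintype m] [DecidableEq n] [DecidableEq m]
    (A : Matrix (Fin T) n ℝ) (B : Matrix (Fin T) m ℝ)
    (hW : IsUnit ((fromCols A B)ᵀ * fromCols A B))
    (hB : IsUnit (Bᵀ * B)) : IsUnit (Aᵀ * annM B * A) := by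
  obtain ⟨iB⟩ := hB.nonempty_invertible
  have hblocks : (fromCols A B)ᵀ * fromCols A B
      = fromBlocks (Aᵀ * A) (Aᵀ * B) (Bᵀ * A) (Bᵀ * B) := by
    rw [Matrix.transpose_fromCols, Matrix.fromRows_mul_fromCols]
  have hdet : IsUnit ((fromCols A B)ᵀ * fromCols A B).det :=
    (Matrix.isUnit_iff_isUnit_det _).mp hW
  rw [hblocks, Matrix.det_fromBlocks₂₂] at hdet
  have h2 : IsUnit (Aᵀ * A - Aᵀ * B * ⅟(Bᵀ * B) * (Bᵀ * A)).det := (IsUnit.mul_iff.mp hdet).2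
  have h3 : Aᵀ * annM B * A = Aᵀ * A - Aᵀ * B * ⅟(Bᵀ * B) * (Bᵀ * A) := by
    rw [invOf_eq_nonsing_inv, annM, projM]
    simp only [Matrix.mul_sub, Matrix.sub_mul, Matrix.mul_one, Matrix.one_mul, Matrix.mul_assoc]
  rw [Matrix.isUnit_iff_isUnit_det, h3]; exact h2

lemma trace_Q_annM {G : ℕ} (Q : Matrix (Fin T) (Fin T) ℝ) (Y : Matrix (Fin T) (Fin G) ℝ)
    (hQidem : Q * Q = Q) (hQt : Qᵀ = Q) (h : IsUnit ((Q * Y)ᵀ * (Q * Y))) :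
    (Q * annM (Q * Y) * Q).trace = Q.trace - (G : ℝ) := by
  have h1 : Q * annM (Q * Y) * Q = Q - Q * projM (Q * Y) * Q := by
    rw [annM, Matrix.mul_sub, Matrix.mul_one, Matrix.sub_mul, hQidem]
  have hq1 : Q * (Q * Y) = Q * Y := by rw [← Matrix.mul_assoc, hQidem]
  have hq2 : (Q * Y)ᵀ * Q = (Q * Y)ᵀ := by
    rw [Matrix.transpose_mul, Matrix.mul_assoc, hQt, hQidem]
  have h2 : Q * projM (Q * Y) * Q = projM (Q * Y) := by
    rw [projM, ← Matrix.mul_assoc, ← Matrix.mul_assoc, hq1, Matrix.mul_assoc _ _ Q, hq2]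
  rw [h1, Matrix.trace_sub, h2, trace_projM _ h, Fintype.card_fin]

end StmtAux

/-- Under the rank condition, the traces (equivalently, the ranks) of the scaled
weighting matrices are: `tr(TΨ₀) = G`, `tr(TΛ₁) = k₂ − G`, `tr(TΛ₂) = T − k₁ − 2G`,
`tr(TΛ₄) = T − k₁ − G`, `tr(TΨ_R) = k₂`, and `tr(TΛ_R) = T − k₁ − k₂ − G`. -/
theorem stmt11 {T G k₁ k₂ : ℕ}
    (hT : 0 < T) (hG : 0 < G) (hk₁ : 0 < k₁) (hk₂ : 0 < k₂)
    (Y : Matrix (Fin T) (Fin G) ℝ)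
    (X₁ : Matrix (Fin T) (Fin k₁) ℝ) (X₂ : Matrix (Fin T) (Fin k₂) ℝ)
    (hrank : RankCond Y X₁ X₂) :
    ((T : ℝ) • Psi0 Y X₁ X₂).trace = (G : ℝ) ∧
    ((T : ℝ) • Lam1 Y X₁ X₂).trace = (k₂ : ℝ) - (G : ℝ) ∧
    ((T : ℝ) • Lam2 Y X₁ X₂).trace = (T : ℝ) - (k₁ : ℝ) - 2 * (G : ℝ) ∧
    ((T : ℝ) • Lam4 Y X₁).trace = (T : ℝ) - (k₁ : ℝ) - (G : ℝ) ∧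
    ((T : ℝ) • PsiR Y X₁ X₂).trace = (k₂ : ℝ) ∧
    ((T : ℝ) • LamR Y X₁ X₂).trace = (T : ℝ) - (k₁ : ℝ) - (k₂ : ℝ) - (G : ℝ) := by
  obtain ⟨hr1, hrX, hrZ, hrW⟩ := hrank
  have hTne : (T : ℝ) ≠ 0 := Nat.cast_ne_zero.mpr hT.ne'
  -- invertibility of the basic Gram matrices
  have hu1 : IsUnit (X₁ᵀ * X₁) := StmtAux.gram_isUnit_of_rank X₁ (by simpa using hr1)
  have huX : IsUnit ((fromCols X₁ X₂)ᵀ * fromCols X₁ X₂) :=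
    StmtAux.gram_isUnit_of_rank _ (by simpa [Fintype.card_sum] using hrX)
  have hinjZ : Function.Injective (fromCols Y (fromCols X₁ X₂)).mulVec :=
    StmtAux.inj_of_rank _ (by simpa [Fintype.card_sum] using hrZ)
  have huZ : IsUnit ((fromCols Y (fromCols X₁ X₂))ᵀ * fromCols Y (fromCols X₁ X₂)) :=
    StmtAux.gram_isUnit _ hinjZ
  have huW : IsUnit ((fromCols (Pm X₁ X₂ * Y) X₁)ᵀ * fromCols (Pm X₁ X₂ * Y) X₁) :=
    StmtAux.gram_isUnit_of_rank _ (by simpa [Fintype.card_sum] using hrW)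
  -- [Y, X₁] has full column rank
  have hinjYbar : Function.Injective (fromCols Y X₁).mulVec := by
    intro x y hxy
    have hx0 : fromCols Y X₁ *ᵥ (x - y) = 0 := by
      rw [Matrix.mulVec_sub, sub_eq_zero]; exact hxy
    set u := (x - y) ∘ Sum.inl with hu
    set v := (x - y) ∘ Sum.inr with hv
    have hxe : x - y = Sum.elim u v := by ext i; cases i <;> rfl
    have h1 : fromCols Y (fromCols X₁ X₂) *ᵥ Sum.elim u (Sum.elim v 0)
        = fromCols Y (fromCols X₁ X₂) *ᵥ 0 := by
      rw [Matrix.mulVec_zero, Matrix.fromCols_mulVec_sumElim,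
        Matrix.fromCols_mulVec_sumElim, Matrix.mulVec_zero, add_zero]
      rw [hxe, Matrix.fromCols_mulVec_sumElim] at hx0; exact hx0
    have h2 := hinjZ h1
    have h3 : x - y = 0 := by
      rw [hxe]; ext i
      cases i with
      | inl i => simpa using congrFun h2 (Sum.inl i)
      | inr i => simpa using congrFun h2 (Sum.inr (Sum.inl i))
    exact sub_eq_zero.mp h3
  have huYb : IsUnit ((fromCols Y X₁)ᵀ * fromCols Y X₁) := StmtAux.gram_isUnit _ hinjYbar
  -- projection algebra
  have hPidem : Pm X₁ X₂ * Pm X₁ X₂ = Pm X₁ X₂ := StmtAux.projM_idem _ huX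
  have hPt : (Pm X₁ X₂)ᵀ = Pm X₁ X₂ := StmtAux.projM_transpose _
  have hP1idem : projM X₁ * projM X₁ = projM X₁ := StmtAux.projM_idem _ hu1
  have hP1t : (projM X₁)ᵀ = projM X₁ := StmtAux.projM_transpose _
  have hPX : Pm X₁ X₂ * fromCols X₁ X₂ = fromCols X₁ X₂ := StmtAux.projM_mul_base _ huX
  have hPX1 : Pm X₁ X₂ * X₁ = X₁ := by
    rw [Matrix.mul_fromCols] at hPX
    exact ((Matrix.fromCols_ext_iff _ _ _ _).mp hPX).1
  have hPP1 : Pm X₁ X₂ * projM X₁ = projM X₁ := by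
    rw [projM, ← Matrix.mul_assoc, ← Matrix.mul_assoc, hPX1]
  have hP1P : projM X₁ * Pm X₁ X₂ = projM X₁ := by
    have h := congrArg Matrix.transpose hPP1
    rwa [Matrix.transpose_mul, hPt, hP1t] at h
  have hN1 : N1 X₁ X₂ = Pm X₁ X₂ - projM X₁ := by
    simp only [N1, M1, annM]
    rw [Matrix.sub_mul, Matrix.one_mul, hP1P]
  have hNidem : N1 X₁ X₂ * N1 X₁ X₂ = N1 X₁ X₂ := by
    rw [hN1, Matrix.sub_mul, Matrix.mul_sub, Matrix.mul_sub, hPidem, hPP1, hP1P, hP1idem]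
    simp
  have hNt : (N1 X₁ X₂)ᵀ = N1 X₁ X₂ := by rw [hN1, Matrix.transpose_sub, hPt, hP1t]
  have hM1idem : M1 X₁ * M1 X₁ = M1 X₁ := by
    simp only [M1, annM]
    rw [Matrix.sub_mul, Matrix.mul_sub, Matrix.mul_sub, Matrix.mul_one, Matrix.one_mul, hP1idem]
    simp
  have hM1t : (M1 X₁)ᵀ = M1 X₁ := by
    simp only [M1, annM]
    rw [Matrix.transpose_sub, Matrix.transpose_one, hP1t]
  have hM1N : M1 X₁ * N1 X₁ X₂ = N1 X₁ X₂ := by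
    rw [hN1]; simp only [M1, annM]
    rw [Matrix.sub_mul, Matrix.one_mul, Matrix.mul_sub, hP1P, hP1idem]
    simp
  have hNM1 : N1 X₁ X₂ * M1 X₁ = N1 X₁ X₂ := by
    have h := congrArg Matrix.transpose hM1N
    rwa [Matrix.transpose_mul, hM1t, hNt] at h
  have hMdiff : M1 X₁ - N1 X₁ X₂ = Mm X₁ X₂ := by
    rw [hN1]; simp only [M1, Mm, Pm, annM]
    abel
  -- invertibility of the three quadratic forms in Y
  have hBu : IsUnit (Yᵀ * M1 X₁ * Y) := by
    have h := StmtAux.isUnit_schur Y X₁ huYb hu1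
    simpa only [M1] using h
  have hVu : IsUnit (Yᵀ * Mm X₁ X₂ * Y) := by
    have h := StmtAux.isUnit_schur Y (fromCols X₁ X₂) huZ huX
    simpa only [Mm] using h
  have hAu : IsUnit (Yᵀ * N1 X₁ X₂ * Y) := by
    have h0 := StmtAux.isUnit_schur (Pm X₁ X₂ * Y) X₁ huW hu1
    have hM1e : annM X₁ = M1 X₁ := rfl
    have hPN : Pm X₁ X₂ * N1 X₁ X₂ = N1 X₁ X₂ := by
      rw [hN1, Matrix.mul_sub, hPidem, hPP1]
    have hN1def : M1 X₁ * Pm X₁ X₂ = N1 X₁ X₂ := rfl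
    have key : (Pm X₁ X₂ * Y)ᵀ * M1 X₁ * (Pm X₁ X₂ * Y) = Yᵀ * N1 X₁ X₂ * Y := by
      rw [Matrix.transpose_mul, hPt]
      simp only [Matrix.mul_assoc]
      congr 1
      rw [← Matrix.mul_assoc (M1 X₁) (Pm X₁ X₂) Y, ← Matrix.mul_assoc, hN1def, hPN]
    rw [hM1e, key] at h0
    exact h0
  have hAdet : IsUnit (Yᵀ * N1 X₁ X₂ * Y).det := (Matrix.isUnit_iff_isUnit_det _).mp hAu
  have hBdet : IsUnit (Yᵀ * M1 X₁ * Y).det := (Matrix.isUnit_iff_isUnit_det _).mp hBu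
  -- trace values of the projections
  have htrP : (Pm X₁ X₂).trace = (k₁ : ℝ) + k₂ := by
    have h := StmtAux.trace_projM _ huX
    simpa [Fintype.card_sum, Pm] using h
  have htrP1 : (projM X₁).trace = (k₁ : ℝ) := by
    simpa using StmtAux.trace_projM _ hu1
  have htrM1 : (M1 X₁).trace = (T : ℝ) - k₁ := by
    have h := StmtAux.trace_annM X₁ hu1
    simpa [M1] using h
  -- Gram matrices of N₁Y and M₁Y
  have hgramN : (N1 X₁ X₂ * Y)ᵀ * (N1 X₁ X₂ * Y) = Yᵀ * N1 X₁ X₂ * Y := by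
    rw [Matrix.transpose_mul, hNt, Matrix.mul_assoc, ← Matrix.mul_assoc (N1 X₁ X₂), hNidem,
      ← Matrix.mul_assoc]
  have hgramM : (M1 X₁ * Y)ᵀ * (M1 X₁ * Y) = Yᵀ * M1 X₁ * Y := by
    rw [Matrix.transpose_mul, hM1t, Matrix.mul_assoc, ← Matrix.mul_assoc (M1 X₁), hM1idem,
      ← Matrix.mul_assoc]
  have hAnnN1u : IsUnit ((N1 X₁ X₂ * Y)ᵀ * (N1 X₁ X₂ * Y)) := by rw [hgramN]; exact hAu
  have hAnnM1u : IsUnit ((M1 X₁ * Y)ᵀ * (M1 X₁ * Y)) := by rw [hgramM]; exact hBu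
  -- transposes of quadratic forms and their inverses
  have hAt : (Yᵀ * N1 X₁ X₂ * Y)ᵀ = Yᵀ * N1 X₁ X₂ * Y := by
    rw [Matrix.transpose_mul, Matrix.transpose_mul, Matrix.transpose_transpose, hNt,
      ← Matrix.mul_assoc]
  have hBt : (Yᵀ * M1 X₁ * Y)ᵀ = Yᵀ * M1 X₁ * Y := by
    rw [Matrix.transpose_mul, Matrix.transpose_mul, Matrix.transpose_transpose, hM1t,
      ← Matrix.mul_assoc]
  have hAinvT : ((Yᵀ * N1 X₁ X₂ * Y)⁻¹)ᵀ = (Yᵀ * N1 X₁ X₂ * Y)⁻¹ := by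
    rw [Matrix.transpose_nonsing_inv, hAt]
  have hBinvT : ((Yᵀ * M1 X₁ * Y)⁻¹)ᵀ = (Yᵀ * M1 X₁ * Y)⁻¹ := by
    rw [Matrix.transpose_nonsing_inv, hBt]
  have hB2t : (B2 Y X₁ X₂)ᵀ = N1 X₁ X₂ * Y * (Yᵀ * N1 X₁ X₂ * Y)⁻¹ := by
    simp only [B2]
    rw [Matrix.transpose_mul, Matrix.transpose_mul, Matrix.transpose_transpose, hNt, hAinvT]
  have hB1t : (B1 Y X₁)ᵀ = M1 X₁ * Y * (Yᵀ * M1 X₁ * Y)⁻¹ := by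
    simp only [B1]
    rw [Matrix.transpose_mul, Matrix.transpose_mul, Matrix.transpose_transpose, hM1t, hBinvT]
  -- middle collapses
  have hmidN : Yᵀ * N1 X₁ X₂ * (N1 X₁ X₂ * Y) = Yᵀ * N1 X₁ X₂ * Y := by
    rw [Matrix.mul_assoc, ← Matrix.mul_assoc (N1 X₁ X₂), hNidem, ← Matrix.mul_assoc]
  have hmidMN : Yᵀ * M1 X₁ * (N1 X₁ X₂ * Y) = Yᵀ * N1 X₁ X₂ * Y := by
    rw [Matrix.mul_assoc, ← Matrix.mul_assoc (M1 X₁), hM1N, ← Matrix.mul_assoc]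
  have hmidNM : Yᵀ * N1 X₁ X₂ * (M1 X₁ * Y) = Yᵀ * N1 X₁ X₂ * Y := by
    rw [Matrix.mul_assoc, ← Matrix.mul_assoc (N1 X₁ X₂), hNM1, ← Matrix.mul_assoc]
  have hmidM : Yᵀ * M1 X₁ * (M1 X₁ * Y) = Yᵀ * M1 X₁ * Y := by
    rw [Matrix.mul_assoc, ← Matrix.mul_assoc (M1 X₁), hM1idem, ← Matrix.mul_assoc]
  -- products of the B's
  have hB2B2 : B2 Y X₁ X₂ * (B2 Y X₁ X₂)ᵀ = (Yᵀ * N1 X₁ X₂ * Y)⁻¹ := by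
    rw [hB2t]; simp only [B2]
    rw [Matrix.mul_assoc, ← Matrix.mul_assoc (Yᵀ * N1 X₁ X₂), hmidN,
      Matrix.mul_nonsing_inv _ hAdet, Matrix.mul_one]
  have hB1B1 : B1 Y X₁ * (B1 Y X₁)ᵀ = (Yᵀ * M1 X₁ * Y)⁻¹ := by
    rw [hB1t]; simp only [B1]
    rw [Matrix.mul_assoc, ← Matrix.mul_assoc (Yᵀ * M1 X₁), hmidM,
      Matrix.mul_nonsing_inv _ hBdet, Matrix.mul_one]
  have hB2B1 : B2 Y X₁ X₂ * (B1 Y X₁)ᵀ = (Yᵀ * M1 X₁ * Y)⁻¹ := by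
    rw [hB1t]; simp only [B2]
    rw [Matrix.mul_assoc, ← Matrix.mul_assoc (Yᵀ * N1 X₁ X₂), hmidNM,
      ← Matrix.mul_assoc, Matrix.nonsing_inv_mul _ hAdet, Matrix.one_mul]
  have hB1B2 : B1 Y X₁ * (B2 Y X₁ X₂)ᵀ = (Yᵀ * M1 X₁ * Y)⁻¹ := by
    rw [hB2t]; simp only [B1]
    rw [Matrix.mul_assoc, ← Matrix.mul_assoc (Yᵀ * M1 X₁), hmidMN,
      ← Matrix.mul_assoc, Matrix.mul_assoc _ (Yᵀ * N1 X₁ X₂ * Y) _,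
      Matrix.mul_nonsing_inv _ hAdet, Matrix.mul_one]
  have hCC : C1 Y X₁ X₂ * (C1 Y X₁ X₂)ᵀ
      = (Yᵀ * N1 X₁ X₂ * Y)⁻¹ - (Yᵀ * M1 X₁ * Y)⁻¹ := by
    simp only [C1]
    rw [Matrix.transpose_sub, Matrix.sub_mul, Matrix.mul_sub, Matrix.mul_sub,
      hB2B2, hB2B1, hB1B2, hB1B1]
    simp
  -- Δ̂ is T times an invertible matrix
  have hBmA : Yᵀ * M1 X₁ * Y - Yᵀ * N1 X₁ X₂ * Y = Yᵀ * Mm X₁ X₂ * Y := by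
    rw [← Matrix.sub_mul, ← Matrix.mul_sub, hMdiff]
  have hDfact : (Yᵀ * N1 X₁ X₂ * Y)⁻¹ * (Yᵀ * Mm X₁ X₂ * Y) * (Yᵀ * M1 X₁ * Y)⁻¹
      = (Yᵀ * N1 X₁ X₂ * Y)⁻¹ - (Yᵀ * M1 X₁ * Y)⁻¹ := by
    rw [← hBmA, Matrix.mul_sub, Matrix.sub_mul, Matrix.mul_assoc,
      Matrix.mul_nonsing_inv _ hBdet, Matrix.mul_one, Matrix.nonsing_inv_mul _ hAdet,
      Matrix.one_mul]
  have hDu : IsUnit ((Yᵀ * N1 X₁ X₂ * Y)⁻¹ - (Yᵀ * M1 X₁ * Y)⁻¹) := by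
    rw [← hDfact]
    exact ((Matrix.isUnit_nonsing_inv_iff.mpr hAu).mul hVu).mul
      (Matrix.isUnit_nonsing_inv_iff.mpr hBu)
  have hDdet : IsUnit ((Yᵀ * N1 X₁ X₂ * Y)⁻¹ - (Yᵀ * M1 X₁ * Y)⁻¹).det :=
    (Matrix.isUnit_iff_isUnit_det _).mp hDu
  have hOmIVinv : (OmIV Y X₁ X₂)⁻¹ = (T : ℝ) • (Yᵀ * N1 X₁ X₂ * Y)⁻¹ := by
    apply Matrix.inv_eq_right_inv
    simp only [OmIV]
    rw [smul_mul_assoc, mul_smul_comm, smul_smul, Matrix.mul_nonsing_inv _ hAdet,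
      inv_mul_cancel₀ hTne, one_smul]
  have hOmLSinv : (OmLS Y X₁)⁻¹ = (T : ℝ) • (Yᵀ * M1 X₁ * Y)⁻¹ := by
    apply Matrix.inv_eq_right_inv
    simp only [OmLS]
    rw [smul_mul_assoc, mul_smul_comm, smul_smul, Matrix.mul_nonsing_inv _ hBdet,
      inv_mul_cancel₀ hTne, one_smul]
  have hDhat : Dhat Y X₁ X₂
      = (T : ℝ) • ((Yᵀ * N1 X₁ X₂ * Y)⁻¹ - (Yᵀ * M1 X₁ * Y)⁻¹) := by
    simp only [Dhat]
    rw [hOmIVinv, hOmLSinv, smul_sub]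
  have hDhatInv : (Dhat Y X₁ X₂)⁻¹
      = (T : ℝ)⁻¹ • ((Yᵀ * N1 X₁ X₂ * Y)⁻¹ - (Yᵀ * M1 X₁ * Y)⁻¹)⁻¹ := by
    apply Matrix.inv_eq_right_inv
    rw [hDhat, smul_mul_assoc, mul_smul_comm, smul_smul, Matrix.mul_nonsing_inv _ hDdet,
      mul_inv_cancel₀ hTne, one_smul]
  -- trace of TΨ₀
  have hPsiTr : ((T : ℝ) • Psi0 Y X₁ X₂).trace = (G : ℝ) := by
    simp only [Psi0]
    rw [hDhatInv, Matrix.mul_smul, Matrix.smul_mul, smul_smul, mul_inv_cancel₀ hTne, one_smul,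
      Matrix.trace_mul_comm, ← Matrix.mul_assoc, hCC, Matrix.mul_nonsing_inv _ hDdet,
      Matrix.trace_one, Fintype.card_fin]
  -- trace of TΛ₁
  have hLam1Tr : ((T : ℝ) • Lam1 Y X₁ X₂).trace = (k₂ : ℝ) - G := by
    simp only [Lam1]
    rw [smul_smul, mul_inv_cancel₀ hTne, one_smul,
      StmtAux.trace_Q_annM _ _ hNidem hNt hAnnN1u, hN1, Matrix.trace_sub, htrP, htrP1]
    ring
  -- trace of TΛ₄
  have hLam4Tr : ((T : ℝ) • Lam4 Y X₁).trace = (T : ℝ) - k₁ - G := by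
    simp only [Lam4]
    rw [smul_smul, mul_inv_cancel₀ hTne, one_smul,
      StmtAux.trace_Q_annM _ _ hM1idem hM1t hAnnM1u, htrM1]
  -- trace of TΛ₂
  have hC1M1 : C1 Y X₁ X₂ * M1 X₁ = C1 Y X₁ X₂ := by
    simp only [C1, B2, B1, Matrix.sub_mul, Matrix.mul_assoc]
    rw [hNM1, hM1idem]
  have hM1C1t : M1 X₁ * (C1 Y X₁ X₂)ᵀ = (C1 Y X₁ X₂)ᵀ := by
    have h := congrArg Matrix.transpose hC1M1
    rwa [Matrix.transpose_mul, hM1t] at h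
  have hM1Psi : M1 X₁ * Psi0 Y X₁ X₂ * M1 X₁ = Psi0 Y X₁ X₂ := by
    simp only [Psi0]
    rw [← Matrix.mul_assoc, ← Matrix.mul_assoc, hM1C1t,
      Matrix.mul_assoc _ (C1 Y X₁ X₂) (M1 X₁), hC1M1]
  have hLam2Tr : ((T : ℝ) • Lam2 Y X₁ X₂).trace = (T : ℝ) - k₁ - 2 * G := by
    simp only [Lam2]
    have hexp : (T : ℝ) • (M1 X₁ * ((T : ℝ)⁻¹ • annM (M1 X₁ * Y) - Psi0 Y X₁ X₂) * M1 X₁)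
        = M1 X₁ * annM (M1 X₁ * Y) * M1 X₁
          - (T : ℝ) • (M1 X₁ * Psi0 Y X₁ X₂ * M1 X₁) := by
      rw [Matrix.mul_sub, Matrix.sub_mul, smul_sub, mul_smul_comm, smul_mul_assoc, smul_smul,
        mul_inv_cancel₀ hTne, one_smul]
    rw [hexp, Matrix.trace_sub, StmtAux.trace_Q_annM _ _ hM1idem hM1t hAnnM1u, htrM1,
      hM1Psi, hPsiTr]
    ring
  -- traces of TΨ_R and TΛ_R
  have hYbarEq : Ybar Y X₁ = fromCols Y X₁ := rfl
  have hZEq : Zfull Y X₁ X₂ = fromCols Y (fromCols X₁ X₂) := rfl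
  have htrAnnYb : (annM (Ybar Y X₁)).trace = (T : ℝ) - (G + k₁ : ℝ) := by
    rw [hYbarEq]
    have h := StmtAux.trace_annM _ huYb
    simpa [Fintype.card_sum] using h
  have htrAnnZ : (annM (Zfull Y X₁ X₂)).trace = (T : ℝ) - (G + (k₁ + k₂) : ℝ) := by
    rw [hZEq]
    have h := StmtAux.trace_annM _ huZ
    simpa [Fintype.card_sum] using h
  have hPsiRTr : ((T : ℝ) • PsiR Y X₁ X₂).trace = (k₂ : ℝ) := by
    simp only [PsiR]
    rw [smul_smul, mul_inv_cancel₀ hTne, one_smul, Matrix.trace_sub, htrAnnYb, htrAnnZ]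
    ring
  have hLamRTr : ((T : ℝ) • LamR Y X₁ X₂).trace = (T : ℝ) - k₁ - k₂ - G := by
    simp only [LamR]
    rw [smul_smul, mul_inv_cancel₀ hTne, one_smul, htrAnnZ]
    ring
  exact ⟨hPsiTr, hLam1Tr, hLam2Tr, hLam4Tr, hPsiRTr, hLamRTr⟩
end
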